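/- arXiv:1903.04970 — 4 statements merged into one kernel-verified Lean document; each statement's English description precedes it below -/
import Mathlib

section
/- Let d_S ≥ 1, d_M ≥ 1, β > 0, and machine energies 0 = ℰ_0 ≤ ⋯ ≤ ℰ_{d_M−1} = ℰ_max with Gibbs state τ_M = τ(β,ℰ), and set g = e^{−β ℰ_max}. If ρ is a density matrix on ℂ^{d_S} whose eigenvalue vector is majorized by p*(g,d_S), then for every n ≥ 1 and every sequence of unitaries U_1,…,U_n on ℂ^{d_S}⊗ℂ^{d_M}, the eigenvalue vector of the n-cycle output Λ_{U_n}∘⋯∘Λ_{U_1}(ρ) (the machine being reset to τ_M before each cycle, as encoded in the definition of Λ) is majorized by p*(g,d_S). -/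
open Filter Topology Kronecker Matrix
open scoped ComplexOrder

/-- Sum of the `k` largest entries of a real vector (maximum of all `k`-element subset sums). -/
noncomputable def sumKLargest {ι : Type*} [Fintype ι] (v : ι → ℝ) (k : ℕ) : ℝ :=
  sSup {x : ℝ | ∃ s : Finset ι, s.card = k ∧ ∑ i ∈ s, v i = x}

/-- `IsMajorizedBy x y` means `x ≺ y`: same total sum, and for every `k = 1,…,n` the
sum of the `k` largest entries of `x` is at most that of `y`. -/
def IsMajorizedBy {ι : Type*} [Fintype ι] (x y : ι → ℝ) : Prop :=
  (∑ i, x i = ∑ i, y i) ∧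
  ∀ k : ℕ, 1 ≤ k → k ≤ Fintype.card ι → sumKLargest x k ≤ sumKLargest y k

/-- The decreasing rearrangement of a real vector. -/
noncomputable def sortDesc {n : ℕ} (v : Fin n → ℝ) : Fin n → ℝ :=
  fun i => v (Tuple.sort v i.rev)

/-- The geometric probability vector `p*(g,d)` with entries `g^i / ∑_j g^j`. -/
noncomputable def pstar (g : ℝ) (d : ℕ) : Fin d → ℝ :=
  fun i => g ^ (i : ℕ) / ∑ j : Fin d, g ^ (j : ℕ)

/-- The Gibbs probability vector at inverse temperature `β` for energies `E`. -/
noncomputable def gibbsVec {m : ℕ} (β : ℝ) (E : Fin m → ℝ) : Fin m → ℝ :=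
  fun j => Real.exp (-(β * E j)) / ∑ k : Fin m, Real.exp (-(β * E k))

/-- The Gibbs state: diagonal density matrix with the Gibbs vector on the diagonal. -/
noncomputable def gibbsState {m : ℕ} (β : ℝ) (E : Fin m → ℝ) : Matrix (Fin m) (Fin m) ℂ :=
  Matrix.diagonal fun j => (gibbsVec β E j : ℂ)

/-- The eigenvalues of a Hermitian matrix (junk value `0` if not Hermitian). -/
noncomputable def eigVec {ι : Type*} [Fintype ι] [DecidableEq ι] (ρ : Matrix ι ι ℂ) : ι → ℝ := by
  classical exact if h : ρ.IsHermitian then h.eigenvalues else 0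

/-- The eigenvalue vector of a Hermitian matrix, listed in decreasing order. -/
noncomputable def eigVecDesc {d : ℕ} (ρ : Matrix (Fin d) (Fin d) ℂ) : Fin d → ℝ :=
  sortDesc (eigVec ρ)

/-- Partial trace over the machine: `(Tr_M X)_{s,s'} = ∑_m X_{(s,m),(s',m)}`. -/
noncomputable def ptraceM {dS dM : ℕ}
    (X : Matrix (Fin dS × Fin dM) (Fin dS × Fin dM) ℂ) : Matrix (Fin dS) (Fin dS) ℂ :=
  Matrix.of fun s s' => ∑ m : Fin dM, X (s, m) (s', m)

/-- The coherent operation `Λ_U(ρ) = Tr_M (U (ρ ⊗ τ_M) U†)` where `τ_M` is the diagonal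
machine state with diagonal `τ`. -/
noncomputable def coherentOp {dS dM : ℕ} (τ : Fin dM → ℝ)
    (U : Matrix (Fin dS × Fin dM) (Fin dS × Fin dM) ℂ)
    (ρ : Matrix (Fin dS) (Fin dS) ℂ) : Matrix (Fin dS) (Fin dS) ℂ :=
  ptraceM (U * (ρ ⊗ₖ Matrix.diagonal fun j => (τ j : ℂ)) * Uᴴ)

/-- `Λ_{U_n} ∘ ⋯ ∘ Λ_{U_1} (ρ)`: the machine is reset to its Gibbs state before each cycle. -/
noncomputable def coherentSeq {dS dM : ℕ} (τ : Fin dM → ℝ) {n : ℕ}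
    (U : Fin n → Matrix (Fin dS × Fin dM) (Fin dS × Fin dM) ℂ)
    (ρ : Matrix (Fin dS) (Fin dS) ℂ) : Matrix (Fin dS) (Fin dS) ℂ :=
  (List.ofFn U).foldl (fun σ V => coherentOp τ V σ) ρ

/-- The optimal coherent operation `A`: the diagonal matrix whose `i`-th diagonal entry is
`∑_{j<d_M} λ_{i·d_M+j}` where `λ` is the decreasing list of eigenvalues of `ρ ⊗ τ_M`. -/
noncomputable def Aopt {dS dM : ℕ} (τ : Fin dM → ℝ)
    (ρ : Matrix (Fin dS) (Fin dS) ℂ) : Matrix (Fin dS) (Fin dS) ℂ :=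
  Matrix.diagonal fun i : Fin dS =>
    ((∑ j : Fin dM,
      sortDesc
        (fun k : Fin (dS * dM) =>
          eigVec (ρ ⊗ₖ Matrix.diagonal fun l => (τ l : ℂ)) (finProdFinEquiv.symm k))
        ⟨(i : ℕ) * dM + (j : ℕ), by
          calc (i : ℕ) * dM + (j : ℕ) < (i : ℕ) * dM + dM := by
                exact Nat.add_lt_add_left j.isLt _
            _ = ((i : ℕ) + 1) * dM := by ring
            _ ≤ dS * dM := Nat.mul_le_mul_right dM i.isLt⟩ : ℝ) : ℂ)

/-- `Δ_i(p) = a·p_i − b·p_{i−1}` for `i ≥ 1` (and `0` for `i = 0`). -/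
noncomputable def delta (a b : ℝ) {d : ℕ} (p : Fin d → ℝ) (i : Fin d) : ℝ :=
  if (i : ℕ) = 0 then 0
  else a * p i - b * p ⟨(i : ℕ) - 1, Nat.lt_of_le_of_lt (Nat.sub_le _ _) i.isLt⟩

/-- The max-swap map `B`: if some `Δ_i(p) > 0`, pick an index `k̄` maximizing `Δ`,
move `Δ_{k̄}(p)` of population from level `k̄` to level `k̄−1`, and rearrange decreasingly;
otherwise `p` is left unchanged. -/
noncomputable def maxSwap (a b : ℝ) {d : ℕ} (p : Fin d → ℝ) : Fin d → ℝ := by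
  classical
  exact
    if h : ∃ k : Fin d, 0 < delta a b p k ∧ ∀ i, delta a b p i ≤ delta a b p k then
      sortDesc (fun i =>
        if i = h.choose then p h.choose - delta a b p h.choose
        else if (i : ℕ) = (h.choose : ℕ) - 1 then p i + delta a b p h.choose
        else p i)
    else p
set_option linter.unusedSectionVars false
set_option linter.unnecessarySimpa false
set_option linter.unusedTactic false

section SumK
variable {ι : Type*} [Fintype ι] [DecidableEq ι]

lemma sumK_set_eq (v : ι → ℝ) (k : ℕ) :
    {x : ℝ | ∃ s : Finset ι, s.card = k ∧ ∑ i ∈ s, v i = x}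
      = ↑((Finset.univ.powersetCard k).image (fun s => ∑ i ∈ s, v i)) := by
  ext x
  simp [Finset.mem_powersetCard]

lemma sumK_bddAbove (v : ι → ℝ) (k : ℕ) :
    BddAbove {x : ℝ | ∃ s : Finset ι, s.card = k ∧ ∑ i ∈ s, v i = x} := by
  rw [sumK_set_eq]; exact Finset.bddAbove _

lemma le_sumKLargest (v : ι → ℝ) {k : ℕ} {s : Finset ι} (h : s.card = k) :
    ∑ i ∈ s, v i ≤ sumKLargest v k :=
  le_csSup (sumK_bddAbove v k) ⟨s, h, rfl⟩

lemma sumKLargest_le (v : ι → ℝ) {k : ℕ} (hk : k ≤ Fintype.card ι) {c : ℝ}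
    (h : ∀ s : Finset ι, s.card = k → ∑ i ∈ s, v i ≤ c) : sumKLargest v k ≤ c := by
  apply csSup_le
  · obtain ⟨t, -, ht⟩ := Finset.exists_subset_card_eq (by simpa using hk :
      k ≤ (Finset.univ : Finset ι).card)
    exact ⟨∑ i ∈ t, v i, t, ht, rfl⟩
  · rintro x ⟨s, hs, rfl⟩; exact h s hs

lemma sumKLargest_comp_equiv (v : ι → ℝ) (e : Equiv.Perm ι) (k : ℕ) :
    sumKLargest (v ∘ e) k = sumKLargest v k := by
  unfold sumKLargest
  congr 1
  ext x
  constructor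
  · rintro ⟨s, hs, rfl⟩
    refine ⟨s.image e, by rw [Finset.card_image_of_injective _ e.injective, hs], ?_⟩
    rw [Finset.sum_image (fun a _ b _ h => e.injective h)]
    rfl
  · rintro ⟨s, hs, rfl⟩
    refine ⟨s.image e.symm, by rw [Finset.card_image_of_injective _ e.symm.injective, hs], ?_⟩
    rw [Finset.sum_image (fun a _ b _ h => e.symm.injective h)]
    simp [Function.comp]

lemma sumKLargest_sortDesc {n : ℕ} (v : Fin n → ℝ) (k : ℕ) :
    sumKLargest (sortDesc v) k = sumKLargest v k := by
  have : sortDesc v = v ∘ (Fin.revPerm.trans (Tuple.sort v)) := rfl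
  rw [this, sumKLargest_comp_equiv]

lemma exists_threshold (v : ι → ℝ) {k : ℕ} (hk : k ≤ Fintype.card ι) :
    ∃ T : Finset ι, T.card = k ∧ ∀ a ∈ T, ∀ b ∉ T, v b ≤ v a := by
  induction k with
  | zero => exact ⟨∅, rfl, by simp⟩
  | succ k ih =>
    obtain ⟨T, hTc, hT⟩ := ih (Nat.le_of_succ_le hk)
    have hne : Tᶜ.Nonempty := by
      rw [← Finset.card_pos, Finset.card_compl, hTc]
      omega
    obtain ⟨b₀, hb₀, hmax⟩ := Finset.exists_max_image Tᶜ v hne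
    have hb₀T : b₀ ∉ T := Finset.mem_compl.mp hb₀
    refine ⟨insert b₀ T, by rw [Finset.card_insert_of_notMem hb₀T, hTc], ?_⟩
    intro a ha b hb
    have hbT : b ∉ T := fun h => hb (Finset.mem_insert_of_mem h)
    rcases Finset.mem_insert.mp ha with rfl | haT
    · exact hmax b (Finset.mem_compl.mpr hbT)
    · exact hT a haT b hbT

lemma sum_le_sum_threshold (v : ι → ℝ) {T s : Finset ι} (hcard : s.card = T.card)
    (hT : ∀ a ∈ T, ∀ b ∉ T, v b ≤ v a) : ∑ i ∈ s, v i ≤ ∑ i ∈ T, v i := by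
  have h1 : ∑ i ∈ s ∩ T, v i + ∑ i ∈ s \ T, v i = ∑ i ∈ s, v i :=
    Finset.sum_inter_add_sum_sdiff s T v
  have h2 : ∑ i ∈ T ∩ s, v i + ∑ i ∈ T \ s, v i = ∑ i ∈ T, v i :=
    Finset.sum_inter_add_sum_sdiff T s v
  have hcd : (s \ T).card = (T \ s).card := by
    have e1 : (s \ T).card + (s ∩ T).card = s.card := Finset.card_sdiff_add_card_inter s T
    have e2 : (T \ s).card + (T ∩ s).card = T.card := Finset.card_sdiff_add_card_inter T s
    rw [Finset.inter_comm] at e2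
    omega
  have key : ∑ i ∈ s \ T, v i ≤ ∑ i ∈ T \ s, v i := by
    rcases (T \ s).eq_empty_or_nonempty with he | hne
    · have : (s \ T) = ∅ := Finset.card_eq_zero.mp (by rw [hcd, he]; simp)
      rw [this, he]
    · obtain ⟨y₀, hy₀, hmin⟩ := Finset.exists_min_image (T \ s) v hne
      have hy₀T : y₀ ∈ T := (Finset.mem_sdiff.mp hy₀).1
      calc ∑ i ∈ s \ T, v i ≤ (s \ T).card • v y₀ := by
            apply Finset.sum_le_card_nsmul
            intro x hx
            exact hT y₀ hy₀T x (Finset.mem_sdiff.mp hx).2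
        _ = (T \ s).card • v y₀ := by rw [hcd]
        _ ≤ ∑ i ∈ T \ s, v i := Finset.card_nsmul_le_sum _ _ _ hmin
  calc ∑ i ∈ s, v i = ∑ i ∈ s ∩ T, v i + ∑ i ∈ s \ T, v i := h1.symm
    _ ≤ ∑ i ∈ T ∩ s, v i + ∑ i ∈ T \ s, v i := by
        rw [Finset.inter_comm]
        exact add_le_add le_rfl key
    _ = ∑ i ∈ T, v i := h2

lemma sumKLargest_eq_threshold (v : ι → ℝ) {k : ℕ} {T : Finset ι} (hTc : T.card = k)
    (hT : ∀ a ∈ T, ∀ b ∉ T, v b ≤ v a) : sumKLargest v k = ∑ i ∈ T, v i := by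
  refine le_antisymm ?_ (le_sumKLargest v hTc)
  refine sumKLargest_le v (hTc ▸ T.card_le_univ.trans_eq (by simp)) ?_
  intro s hs
  exact sum_le_sum_threshold v (hs.trans hTc.symm) hT

end SumK

/-- Top-`c` subset of `Fin n`. -/
def finTop (n c : ℕ) (hc : c ≤ n) : Finset (Fin n) :=
  (Finset.univ : Finset (Fin c)).map (Fin.castLEOrderEmb hc).toEmbedding

lemma mem_finTop {n c : ℕ} (hc : c ≤ n) (a : Fin n) :
    a ∈ finTop n c hc ↔ (a : ℕ) < c := by
  simp only [finTop, Finset.mem_map, Finset.mem_univ, true_and]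
  constructor
  · rintro ⟨i, rfl⟩; exact i.isLt
  · intro h; exact ⟨⟨a, h⟩, by ext; rfl⟩

lemma card_finTop {n c : ℕ} (hc : c ≤ n) : (finTop n c hc).card = c := by
  simp [finTop]

lemma sum_finTop {n c : ℕ} (hc : c ≤ n) (f : Fin n → ℝ) :
    ∑ j ∈ finTop n c hc, f j = ∑ t : Fin n, if (t : ℕ) < c then f t else 0 := by
  rw [eq_comm]
  have : ∀ t : Fin n, (if (t : ℕ) < c then f t else 0) = (if t ∈ finTop n c hc then f t else 0) :=
    fun t => if_congr (mem_finTop hc t).symm rfl rfl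
  rw [Finset.sum_congr rfl fun t _ => this t, Finset.sum_ite_mem Finset.univ (finTop n c hc) f,
    Finset.univ_inter]

lemma frac_le_subset' {ι : Type*} [Fintype ι] [DecidableEq ι] (μ d : ι → ℝ)
    (hd0 : ∀ α, 0 ≤ d α) (hd1 : ∀ α, d α ≤ 1) {m : ℕ} (hm1 : 1 ≤ m)
    (hm : m ≤ Fintype.card ι) (hsum : ∑ α, d α = (m : ℝ)) :
    ∃ T : Finset ι, T.card = m ∧ ∑ α, d α * μ α ≤ ∑ α ∈ T, μ α := by
  obtain ⟨T, hTc, hT⟩ := exists_threshold μ hm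
  refine ⟨T, hTc, ?_⟩
  have hTne : T.Nonempty := Finset.card_pos.mp (hTc ▸ hm1)
  obtain ⟨y₀, hy₀, hmin⟩ := Finset.exists_min_image T μ hTne
  set c := μ y₀ with hc
  have expand : ∑ α, d α * μ α = (∑ α, d α * (μ α - c)) + (m : ℝ) * c := by
    rw [← hsum, Finset.sum_mul, ← Finset.sum_add_distrib]
    exact Finset.sum_congr rfl fun α _ => by ring
  have split : (∑ α, d α * (μ α - c)) ≤ ∑ α ∈ T, (μ α - c) := by
    rw [← Finset.sum_add_sum_compl T (fun α => d α * (μ α - c))]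
    have h1 : ∑ α ∈ T, d α * (μ α - c) ≤ ∑ α ∈ T, (μ α - c) := by
      apply Finset.sum_le_sum
      intro α hα
      have h2 : 0 ≤ μ α - c := sub_nonneg.mpr (hmin α hα)
      nlinarith [hd1 α, hd0 α]
    have h2 : ∑ α ∈ Tᶜ, d α * (μ α - c) ≤ 0 := by
      apply Finset.sum_nonpos
      intro α hα
      have : μ α ≤ c := hT y₀ hy₀ α (Finset.mem_compl.mp hα)
      have := hd0 α
      nlinarith
    linarith
  have final : (∑ α ∈ T, (μ α - c)) + (m : ℝ) * c = ∑ α ∈ T, μ α := by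
    rw [Finset.sum_sub_distrib, Finset.sum_const, hTc]
    simp [nsmul_eq_mul]
  linarith

/-- The geometric partial sum function. -/
noncomputable def Pgeo (g : ℝ) (dS : ℕ) (n : ℕ) : ℝ :=
  (∑ i ∈ Finset.range n, g ^ i) / (∑ i ∈ Finset.range dS, g ^ i)

/-- THE core scalar inequality. -/
lemma scalar_core {dS dM : ℕ} (hdM : 0 < dM)
    (g : ℝ) (hg0 : 0 < g) (hg1 : g ≤ 1)
    (lam : Fin dS → ℝ) (hlam0 : ∀ i, 0 ≤ lam i)
    (hsub : ∀ s : Finset (Fin dS), ∑ i ∈ s, lam i ≤ Pgeo g dS s.card)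
    (q : Fin dM → ℝ) (hq0 : ∀ t, 0 ≤ q t) (hqsum : ∑ t, q t = 1)
    (hq_anti : Antitone q)
    (q0 : ℝ) (hq_up : ∀ t, q t ≤ q0) (hq_lo : ∀ t, g * q0 ≤ q t)
    (d : Fin dS × Fin dM → ℝ) (hd0 : ∀ α, 0 ≤ d α) (hd1 : ∀ α, d α ≤ 1)
    (k : ℕ) (hk1 : 1 ≤ k) (hkS : k ≤ dS)
    (hdsum : ∑ α, d α = ((k * dM : ℕ) : ℝ)) :
    ∑ α : Fin dS × Fin dM, d α * (lam α.1 * q α.2) ≤ Pgeo g dS k := by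
  classical
  have hdS : 0 < dS := lt_of_lt_of_le hk1 hkS
  set Z := ∑ i ∈ Finset.range dS, g ^ i with hZ
  have hZpos : 0 < Z := Finset.sum_pos (fun i _ => pow_pos hg0 i) (by simp [Finset.nonempty_range_iff]; omega)
  have hq00 : 0 ≤ q0 := le_trans (hq0 ⟨0, hdM⟩) (hq_up ⟨0, hdM⟩)
  -- Step 1: reduce to an integer subset
  have hm1 : 1 ≤ k * dM := Nat.one_le_iff_ne_zero.mpr (by positivity)
  have hmcard : k * dM ≤ Fintype.card (Fin dS × Fin dM) := by
    rw [Fintype.card_prod, Fintype.card_fin, Fintype.card_fin]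
    exact Nat.mul_le_mul_right dM hkS
  obtain ⟨T, hTc, hTle⟩ := frac_le_subset' (fun α => lam α.1 * q α.2) d hd0 hd1 hm1 hmcard hdsum
  refine le_trans hTle ?_
  -- Step 2: fiberwise analysis
  set c : Fin dS → ℕ := fun i => (T.filter (fun α => α.1 = i)).card with hc
  have hcle : ∀ i, c i ≤ dM := by
    intro i
    have : (T.filter (fun α => α.1 = i)).card ≤ (Finset.univ : Finset (Fin dM)).card := by
      apply Finset.card_le_card_of_injOn Prod.snd (fun a _ => Finset.mem_univ _)
      intro a ha b hb hab
      have ha' := (Finset.mem_filter.mp ha).2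
      have hb' := (Finset.mem_filter.mp hb).2
      exact Prod.ext (ha'.trans hb'.symm) hab
    simpa using this
  have fiber : ∑ α ∈ T, lam α.1 * q α.2
      = ∑ i : Fin dS, ∑ α ∈ T.filter (fun α => α.1 = i), lam α.1 * q α.2 := by
    rw [Finset.sum_fiberwise_eq_sum_filter T Finset.univ Prod.fst (fun α => lam α.1 * q α.2)]
    simp
  set n : Fin dM → ℕ := fun t => (Finset.univ.filter (fun i : Fin dS => (t : ℕ) < c i)).card with hn
  have hnle : ∀ t, n t ≤ dS := fun t => by
    simpa using Finset.card_le_card (Finset.filter_subset _ (Finset.univ : Finset (Fin dS)))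
  have card_lt_filter : ∀ {N cc : ℕ} (hcc : cc ≤ N),
      (Finset.univ.filter (fun t : Fin N => (t : ℕ) < cc)).card = cc := by
    intro N cc hcc
    rw [show Finset.univ.filter (fun t : Fin N => (t : ℕ) < cc) = finTop N cc hcc from
      Finset.ext fun t => by simp [mem_finTop hcc]]
    exact card_finTop hcc
  have inner_bound : ∀ i : Fin dS, ∑ α ∈ T.filter (fun α => α.1 = i), lam α.1 * q α.2
      ≤ lam i * ∑ t : Fin dM, if (t : ℕ) < c i then q t else 0 := by
    intro i
    have e1 : ∑ α ∈ T.filter (fun α => α.1 = i), lam α.1 * q α.2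
        = lam i * ∑ α ∈ T.filter (fun α => α.1 = i), q α.2 := by
      rw [Finset.mul_sum]
      exact Finset.sum_congr rfl fun α hα => by rw [(Finset.mem_filter.mp hα).2]
    rw [e1]
    apply mul_le_mul_of_nonneg_left _ (hlam0 i)
    have injsnd : Set.InjOn Prod.snd ((T.filter (fun α => α.1 = i) : Finset (Fin dS × Fin dM)) : Set (Fin dS × Fin dM)) := by
      intro a ha b hb hab
      have ha' := (Finset.mem_filter.mp ha).2
      have hb' := (Finset.mem_filter.mp hb).2
      exact Prod.ext (ha'.trans hb'.symm) hab
    have e2 : ∑ α ∈ T.filter (fun α => α.1 = i), q α.2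
        = ∑ j ∈ (T.filter (fun α => α.1 = i)).image Prod.snd, q j := by
      rw [Finset.sum_image (fun a ha b hb hab => injsnd ha hb hab)]
    rw [e2, ← sum_finTop (hcle i) q]
    apply sum_le_sum_threshold
    · rw [Finset.card_image_of_injOn injsnd, card_finTop]
    · intro a ha b hb
      rw [mem_finTop] at ha hb
      exact hq_anti (by omega : a ≤ b)
  have swap : ∑ i : Fin dS, lam i * ∑ t : Fin dM, (if (t : ℕ) < c i then q t else 0)
      = ∑ t : Fin dM, q t * ∑ i ∈ Finset.univ.filter (fun i : Fin dS => (t : ℕ) < c i), lam i := by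
    simp_rw [Finset.mul_sum]
    rw [Finset.sum_comm]
    refine Finset.sum_congr rfl fun t _ => ?_
    rw [Finset.sum_filter]
    refine Finset.sum_congr rfl fun i _ => ?_
    by_cases h : (t : ℕ) < c i <;> simp [h, mul_comm]
  -- counting
  have count1 : ∑ i : Fin dS, c i = k * dM := by
    rw [hc, ← Finset.card_eq_sum_card_fiberwise (fun α _ => Finset.mem_univ α.1), hTc]
  have count2 : ∑ t : Fin dM, n t = k * dM := by
    rw [hn]
    simp_rw [Finset.card_filter]
    rw [Finset.sum_comm]
    rw [← count1]
    refine Finset.sum_congr rfl fun i _ => ?_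
    rw [← Finset.card_filter]
    exact card_lt_filter (hcle i)
  -- Step 3: final bound
  have hPk : ∀ m, Pgeo g dS m = (∑ i ∈ Finset.range m, g ^ i) / Z := fun m => rfl
  have key : ∀ t : Fin dM, q t * Pgeo g dS (n t)
      ≤ q t * Pgeo g dS k + (q0 * g ^ k / Z) * ((n t : ℝ) - k) := by
    intro t
    rcases le_or_gt k (n t) with hnk | hnk
    · have hdiff : Pgeo g dS (n t) - Pgeo g dS k = (∑ i ∈ Finset.Ico k (n t), g ^ i) / Z := by
        rw [hPk, hPk, div_sub_div_same, ← Finset.sum_Ico_eq_sub _ hnk]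
      have hnum : ∑ i ∈ Finset.Ico k (n t), g ^ i ≤ ((n t : ℝ) - k) * g ^ k := by
        calc ∑ i ∈ Finset.Ico k (n t), g ^ i ≤ (Finset.Ico k (n t)).card • g ^ k := by
              apply Finset.sum_le_card_nsmul
              intro i hi
              exact pow_le_pow_of_le_one hg0.le hg1 (Finset.mem_Ico.mp hi).1
          _ = ((n t : ℝ) - k) * g ^ k := by
              rw [Nat.card_Ico, nsmul_eq_mul]
              congr 1
              have : (k : ℝ) ≤ (n t : ℝ) := by exact_mod_cast hnk
              push_cast [Nat.cast_sub hnk]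
              ring
      have hdiffnn : 0 ≤ Pgeo g dS (n t) - Pgeo g dS k := by
        rw [hdiff]
        positivity
      have hq' : q t * (Pgeo g dS (n t) - Pgeo g dS k) ≤ q0 * (((n t : ℝ) - k) * g ^ k / Z) := by
        calc q t * (Pgeo g dS (n t) - Pgeo g dS k) ≤ q0 * (Pgeo g dS (n t) - Pgeo g dS k) :=
              mul_le_mul_of_nonneg_right (hq_up t) hdiffnn
          _ ≤ q0 * (((n t : ℝ) - k) * g ^ k / Z) := by
              apply mul_le_mul_of_nonneg_left _ hq00
              rw [hdiff]
              exact div_le_div_of_nonneg_right hnum hZpos.le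
      have e1 : q t * (Pgeo g dS (n t) - Pgeo g dS k)
          = q t * Pgeo g dS (n t) - q t * Pgeo g dS k := by ring
      have e2 : q0 * (((n t : ℝ) - k) * g ^ k / Z) = q0 * g ^ k / Z * ((n t : ℝ) - k) := by
        ring
      linarith
    · have hkn : n t ≤ k := hnk.le
      have hdiff : Pgeo g dS k - Pgeo g dS (n t) = (∑ i ∈ Finset.Ico (n t) k, g ^ i) / Z := by
        rw [hPk, hPk, div_sub_div_same, ← Finset.sum_Ico_eq_sub _ hkn]
      have hnum : ((k : ℝ) - n t) * g ^ (k - 1) ≤ ∑ i ∈ Finset.Ico (n t) k, g ^ i := by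
        calc ((k : ℝ) - n t) * g ^ (k - 1) = (Finset.Ico (n t) k).card • g ^ (k - 1) := by
              rw [Nat.card_Ico, nsmul_eq_mul]
              push_cast [Nat.cast_sub hkn]
              ring
          _ ≤ ∑ i ∈ Finset.Ico (n t) k, g ^ i := by
              apply Finset.card_nsmul_le_sum
              intro i hi
              have hik := (Finset.mem_Ico.mp hi).2
              exact pow_le_pow_of_le_one hg0.le hg1 (by omega : i ≤ k - 1)
      have hgk : g * g ^ (k - 1) = g ^ k := by
        rw [← pow_succ']
        congr 1
        omega
      have hsubnn : (0 : ℝ) ≤ (k : ℝ) - n t := by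
        have : (n t : ℝ) ≤ (k : ℝ) := by exact_mod_cast hkn
        linarith
      have hq' : (g * q0) * (((k : ℝ) - n t) * g ^ (k - 1) / Z)
          ≤ q t * (Pgeo g dS k - Pgeo g dS (n t)) := by
        apply mul_le_mul (hq_lo t)
        · rw [hdiff]
          exact div_le_div_of_nonneg_right hnum hZpos.le
        · exact div_nonneg (mul_nonneg hsubnn (pow_nonneg hg0.le _)) hZpos.le
        · exact hq0 t
      have expand : (g * q0) * (((k : ℝ) - n t) * g ^ (k - 1) / Z)
          = (q0 * g ^ k / Z) * ((k : ℝ) - n t) := by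
        rw [← hgk]
        ring
      have e1 : q t * (Pgeo g dS k - Pgeo g dS (n t))
          = q t * Pgeo g dS k - q t * Pgeo g dS (n t) := by ring
      have e2 : (q0 * g ^ k / Z) * ((k : ℝ) - n t)
          = -((q0 * g ^ k / Z) * ((n t : ℝ) - k)) := by ring
      linarith
  calc ∑ α ∈ T, lam α.1 * q α.2
      = ∑ i : Fin dS, ∑ α ∈ T.filter (fun α => α.1 = i), lam α.1 * q α.2 := fiber
    _ ≤ ∑ i : Fin dS, lam i * ∑ t : Fin dM, (if (t : ℕ) < c i then q t else 0) :=
        Finset.sum_le_sum fun i _ => inner_bound i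
    _ = ∑ t : Fin dM, q t * ∑ i ∈ Finset.univ.filter (fun i : Fin dS => (t : ℕ) < c i), lam i :=
        swap
    _ ≤ ∑ t : Fin dM, q t * Pgeo g dS (n t) :=
        Finset.sum_le_sum fun t _ => mul_le_mul_of_nonneg_left (hsub _) (hq0 t)
    _ ≤ ∑ t : Fin dM, (q t * Pgeo g dS k + (q0 * g ^ k / Z) * ((n t : ℝ) - k)) :=
        Finset.sum_le_sum fun t _ => key t
    _ = Pgeo g dS k := by
        rw [Finset.sum_add_distrib, ← Finset.sum_mul, hqsum, ← Finset.mul_sum]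
        have h2 : ∑ t : Fin dM, ((n t : ℝ)) = (k : ℝ) * dM := by
          have := congrArg (Nat.cast : ℕ → ℝ) count2
          push_cast at this
          exact this
        have h1 : ∑ t : Fin dM, ((n t : ℝ) - k) = 0 := by
          rw [Finset.sum_sub_distrib, h2]
          simp only [Finset.sum_const, Finset.card_univ, Fintype.card_fin, nsmul_eq_mul]
          ring
        rw [h1, mul_zero, one_mul, add_zero]

open Kronecker
open scoped ComplexOrder

/- ### Matrix toolkit -/

lemma kron_conjTranspose {n m : Type*} [Fintype n] [Fintype m]
    (A : Matrix n n ℂ) (B : Matrix m m ℂ) : (A ⊗ₖ B)ᴴ = Aᴴ ⊗ₖ Bᴴ := by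
  ext ⟨i, j⟩ ⟨i', j'⟩
  simp [Matrix.conjTranspose_apply, Matrix.kroneckerMap_apply, star_mul']

/-- the isometry embedding the system next to machine level `m` -/
noncomputable def embM (dS : ℕ) {dM : ℕ} (m : Fin dM) : Matrix (Fin dS × Fin dM) (Fin dS) ℂ :=
  Matrix.of fun α s => if α = (s, m) then 1 else 0

lemma emb_sandwich {dS dM : ℕ} (X : Matrix (Fin dS × Fin dM) (Fin dS × Fin dM) ℂ)
    (m : Fin dM) (s s' : Fin dS) :
    ((embM dS m)ᴴ * X * (embM dS m)) s s' = X (s, m) (s', m) := by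
  simp [embM, Matrix.mul_apply, Matrix.conjTranspose_apply, apply_ite (star : ℂ → ℂ),
    Finset.sum_ite_eq', ite_mul, zero_mul, mul_ite, mul_zero]

lemma ptraceM_eq_sum_emb {dS dM : ℕ} (X : Matrix (Fin dS × Fin dM) (Fin dS × Fin dM) ℂ) :
    ptraceM X = ∑ m : Fin dM, (embM dS m)ᴴ * X * (embM dS m) := by
  ext s s'
  simp [ptraceM, Matrix.sum_apply, emb_sandwich]

lemma ptraceM_posSemidef {dS dM : ℕ} {X : Matrix (Fin dS × Fin dM) (Fin dS × Fin dM) ℂ}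
    (hX : X.PosSemidef) : (ptraceM X).PosSemidef := by
  rw [ptraceM_eq_sum_emb]
  exact Finset.sum_induction _ Matrix.PosSemidef (fun a b ha hb => ha.add hb)
    Matrix.PosSemidef.zero (fun m _ => hX.conjTranspose_mul_mul_same (embM dS m))

lemma ptraceM_trace {dS dM : ℕ} (X : Matrix (Fin dS × Fin dM) (Fin dS × Fin dM) ℂ) :
    (ptraceM X).trace = X.trace := by
  simp only [Matrix.trace, Matrix.diag, ptraceM, Matrix.of_apply, Fintype.sum_prod_type]

lemma trace_mul_ptraceM {dS dM : ℕ} (A : Matrix (Fin dS) (Fin dS) ℂ)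
    (X : Matrix (Fin dS × Fin dM) (Fin dS × Fin dM) ℂ) :
    (A * ptraceM X).trace = ((A ⊗ₖ (1 : Matrix (Fin dM) (Fin dM) ℂ)) * X).trace := by
  have lhs : (A * ptraceM X).trace = ∑ s, ∑ s', ∑ m, A s s' * X (s', m) (s, m) := by
    simp only [Matrix.trace, Matrix.diag, Matrix.mul_apply, ptraceM, Matrix.of_apply,
      Finset.mul_sum]
  have rhs : ((A ⊗ₖ (1 : Matrix (Fin dM) (Fin dM) ℂ)) * X).trace
      = ∑ s, ∑ m, ∑ s', A s s' * X (s', m) (s, m) := by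
    simp only [Matrix.trace, Matrix.diag, Matrix.mul_apply, Fintype.sum_prod_type,
      Matrix.kroneckerMap_apply, Matrix.one_apply, ite_mul, mul_ite, mul_zero, zero_mul,
      mul_one]
    refine Finset.sum_congr rfl fun s _ => Finset.sum_congr rfl fun m _ =>
      Finset.sum_congr rfl fun s' _ => ?_
    simp [Finset.sum_ite_eq]
  rw [lhs, rhs]
  exact Finset.sum_congr rfl fun s _ => Finset.sum_comm

lemma trace_mul_diagonal {n : Type*} [Fintype n] [DecidableEq n] (A : Matrix n n ℂ) (d : n → ℂ) :
    (A * Matrix.diagonal d).trace = ∑ i, A i i * d i := by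
  simp [Matrix.trace, Matrix.diag, Matrix.mul_diagonal]

lemma psd_diag_re_nonneg {n : Type*} [Fintype n] [DecidableEq n] {A : Matrix n n ℂ}
    (hA : A.PosSemidef) (i : n) : 0 ≤ (A i i).re := by
  exact (Complex.le_def.mp (hA.diag_nonneg (i := i))).1

lemma kron_one_mem_unitary {dS dM : ℕ} {V : Matrix (Fin dS) (Fin dS) ℂ}
    (hV : V ∈ Matrix.unitaryGroup (Fin dS) ℂ) :
    V ⊗ₖ (1 : Matrix (Fin dM) (Fin dM) ℂ) ∈ Matrix.unitaryGroup (Fin dS × Fin dM) ℂ := by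
  rw [Matrix.mem_unitaryGroup_iff']
  rw [Matrix.star_eq_conjTranspose, kron_conjTranspose, Matrix.conjTranspose_one,
    ← Matrix.mul_kronecker_mul]
  have h : Vᴴ * V = 1 := by
    simpa [Matrix.star_eq_conjTranspose] using Matrix.mem_unitaryGroup_iff'.mp hV
  rw [h, Matrix.one_mul, Matrix.one_kronecker_one]

lemma sum_eigenvalues_eq_trace {n : Type*} [Fintype n] [DecidableEq n]
    {A : Matrix n n ℂ} (hA : A.IsHermitian) :
    ((∑ i, hA.eigenvalues i : ℝ) : ℂ) = A.trace := by
  simp [hA.trace_eq_sum_eigenvalues]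

lemma eigVec_eq {ι : Type*} [Fintype ι] [DecidableEq ι] {ρ : Matrix ι ι ℂ}
    (h : ρ.IsHermitian) : eigVec ρ = h.eigenvalues := by
  unfold eigVec
  rw [dif_pos h]

lemma pstar_eq (g : ℝ) (d : ℕ) (i : Fin d) :
    pstar g d i = g ^ (i : ℕ) / ∑ j ∈ Finset.range d, g ^ j := by
  rw [pstar, Fin.sum_univ_eq_sum_range (fun j => g ^ j) d]

lemma pstar_antitone {g : ℝ} (hg0 : 0 < g) (hg1 : g ≤ 1) {d : ℕ} (hd : 0 < d) :
    Antitone (pstar g d) := by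
  intro i j hij
  rw [pstar_eq, pstar_eq]
  have hZ : 0 < ∑ j ∈ Finset.range d, g ^ j :=
    Finset.sum_pos (fun i _ => pow_pos hg0 i) (by simp [Finset.nonempty_range_iff]; omega)
  exact div_le_div_of_nonneg_right (pow_le_pow_of_le_one hg0.le hg1 hij) hZ.le
    |>.trans_eq rfl

lemma pstar_sum {g : ℝ} (hg0 : 0 < g) {d : ℕ} (hd : 0 < d) :
    ∑ i, pstar g d i = 1 := by
  have hZ : 0 < ∑ j : Fin d, g ^ (j : ℕ) := by
    apply Finset.sum_pos (fun i _ => pow_pos hg0 _)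
    exact Finset.univ_nonempty_iff.mpr ⟨⟨0, hd⟩⟩ |>.mono (le_refl _)
  unfold pstar
  rw [← Finset.sum_div, div_self hZ.ne']

lemma sumKLargest_pstar {g : ℝ} (hg0 : 0 < g) (hg1 : g ≤ 1) {d : ℕ} (hd : 0 < d)
    {k : ℕ} (hk : k ≤ d) : sumKLargest (pstar g d) k = Pgeo g d k := by
  have hthr : ∀ a ∈ finTop d k hk, ∀ b ∉ finTop d k hk, pstar g d b ≤ pstar g d a := by
    intro a ha b hb
    rw [mem_finTop] at ha hb
    exact pstar_antitone hg0 hg1 hd (by omega : a ≤ b)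
  rw [sumKLargest_eq_threshold (pstar g d) (card_finTop hk) hthr]
  rw [finTop, Finset.sum_map]
  have : ∀ i : Fin k, pstar g d ((Fin.castLEOrderEmb hk).toEmbedding i)
      = g ^ (i : ℕ) / ∑ j ∈ Finset.range d, g ^ j := fun i => pstar_eq g d _
  rw [Finset.sum_congr rfl (fun i _ => this i), ← Finset.sum_div,
    Fin.sum_univ_eq_sum_range (fun j => g ^ j) k]
  rfl

lemma hsub_of_maj {dS : ℕ} (hdS : 0 < dS) {g : ℝ} (hg0 : 0 < g) (hg1 : g ≤ 1)
    {ρ : Matrix (Fin dS) (Fin dS) ℂ} (hρ : ρ.IsHermitian)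
    (hmaj : IsMajorizedBy (eigVecDesc ρ) (pstar g dS)) :
    ∀ s : Finset (Fin dS), ∑ i ∈ s, hρ.eigenvalues i ≤ Pgeo g dS s.card := by
  intro s
  rcases Nat.eq_zero_or_pos s.card with h0 | hpos
  · rw [Finset.card_eq_zero.mp h0]
    simp [Pgeo]
  · have hcard : s.card ≤ dS := by
      simpa using Finset.card_le_univ s
    have h1 : ∑ i ∈ s, hρ.eigenvalues i ≤ sumKLargest hρ.eigenvalues s.card :=
      le_sumKLargest _ rfl
    have h2 : sumKLargest (eigVecDesc ρ) s.card = sumKLargest hρ.eigenvalues s.card := by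
      rw [eigVecDesc, sumKLargest_sortDesc, eigVec_eq hρ]
    have h3 := hmaj.2 s.card hpos (by simpa using hcard)
    rw [h2, sumKLargest_pstar hg0 hg1 hdS hcard] at h3
    linarith

lemma cycle_step {dS dM : ℕ} (hdS : 0 < dS) (hdM : 0 < dM)
    {g : ℝ} (hg0 : 0 < g) (hg1 : g ≤ 1)
    (q : Fin dM → ℝ) (hq0 : ∀ t, 0 ≤ q t) (hqsum : ∑ t, q t = 1) (hq_anti : Antitone q)
    (q0 : ℝ) (hq_up : ∀ t, q t ≤ q0) (hq_lo : ∀ t, g * q0 ≤ q t)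
    (ρ : Matrix (Fin dS) (Fin dS) ℂ) (hρ : ρ.PosSemidef) (hρtr : ρ.trace = 1)
    (hmaj : IsMajorizedBy (eigVecDesc ρ) (pstar g dS))
    (U : Matrix (Fin dS × Fin dM) (Fin dS × Fin dM) ℂ)
    (hU : U ∈ Matrix.unitaryGroup (Fin dS × Fin dM) ℂ) :
    (coherentOp q U ρ).PosSemidef ∧ (coherentOp q U ρ).trace = 1 ∧
      IsMajorizedBy (eigVecDesc (coherentOp q U ρ)) (pstar g dS) := by
  classical
  set lam : Fin dS → ℝ := hρ.1.eigenvalues with hlam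
  have hlam0 : ∀ i, 0 ≤ lam i := fun i => hρ.eigenvalues_nonneg i
  set V : Matrix (Fin dS) (Fin dS) ℂ := (hρ.1.eigenvectorUnitary : Matrix (Fin dS) (Fin dS) ℂ)
    with hV
  have hVmem : V ∈ Matrix.unitaryGroup (Fin dS) ℂ := hρ.1.eigenvectorUnitary.2
  set τC : Matrix (Fin dM) (Fin dM) ℂ := Matrix.diagonal (fun j => (q j : ℂ)) with hτC
  set Dμ : Matrix (Fin dS × Fin dM) (Fin dS × Fin dM) ℂ :=
    Matrix.diagonal (fun α => ((lam α.1 : ℂ)) * ((q α.2 : ℂ))) with hDμ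
  have hρspec : ρ = V * Matrix.diagonal (RCLike.ofReal ∘ lam) * Vᴴ := by
    rw [hV, hlam, ← Matrix.star_eq_conjTranspose]
    exact hρ.1.spectral_theorem
  have hσdecomp : ρ ⊗ₖ τC = (V ⊗ₖ (1 : Matrix (Fin dM) (Fin dM) ℂ)) * Dμ
      * (V ⊗ₖ (1 : Matrix (Fin dM) (Fin dM) ℂ))ᴴ := by
    conv_lhs => rw [hρspec, show τC = 1 * τC * 1 by rw [Matrix.one_mul, Matrix.mul_one]]
    rw [Matrix.mul_kronecker_mul, Matrix.mul_kronecker_mul, kron_conjTranspose,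
      Matrix.conjTranspose_one]
    congr 1
    rw [hτC, Matrix.diagonal_kronecker_diagonal]
    rfl
  have hDμpsd : Dμ.PosSemidef := by
    rw [hDμ, Matrix.posSemidef_diagonal_iff]
    intro α
    rw [← Complex.ofReal_mul, Complex.zero_le_real]
    exact mul_nonneg (hlam0 _) (hq0 _)
  have hσpsd : (ρ ⊗ₖ τC).PosSemidef := by
    rw [hσdecomp]
    exact hDμpsd.mul_mul_conjTranspose_same _
  have hXpsd : (U * (ρ ⊗ₖ τC) * Uᴴ).PosSemidef := hσpsd.mul_mul_conjTranspose_same U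
  have hout : coherentOp q U ρ = ptraceM (U * (ρ ⊗ₖ τC) * Uᴴ) := rfl
  have hψpsd : (coherentOp q U ρ).PosSemidef := by
    rw [hout]; exact ptraceM_posSemidef hXpsd
  have hUU : Uᴴ * U = 1 := by
    simpa [Matrix.star_eq_conjTranspose] using Matrix.mem_unitaryGroup_iff'.mp hU
  have htr : (coherentOp q U ρ).trace = 1 := by
    rw [hout, ptraceM_trace, Matrix.trace_mul_cycle, hUU, Matrix.one_mul,
      Matrix.trace_kronecker, hρtr, hτC, Matrix.trace_diagonal, one_mul]
    rw [← Complex.ofReal_sum, hqsum, Complex.ofReal_one]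
  refine ⟨hψpsd, htr, ?_, ?_⟩
  · -- sum equality
    have h1 : ∑ i, eigVecDesc (coherentOp q U ρ) i = ∑ i, hψpsd.1.eigenvalues i := by
      rw [eigVecDesc, eigVec_eq hψpsd.1]
      exact Equiv.sum_comp (Fin.revPerm.trans (Tuple.sort hψpsd.1.eigenvalues))
        hψpsd.1.eigenvalues
    have h2 : ((∑ i, hψpsd.1.eigenvalues i : ℝ) : ℂ) = 1 := by
      rw [sum_eigenvalues_eq_trace hψpsd.1, htr]
    rw [h1, pstar_sum hg0 hdS]
    exact_mod_cast h2
  · -- k-sums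
    intro k hk1 hkc
    have hkS : k ≤ dS := by simpa using hkc
    rw [eigVecDesc, sumKLargest_sortDesc, eigVec_eq hψpsd.1,
      sumKLargest_pstar hg0 hg1 hdS hkS]
    apply sumKLargest_le _ (by simpa using hkS)
    intro s hs
    set lam' : Fin dS → ℝ := hψpsd.1.eigenvalues with hlam'
    set W : Matrix (Fin dS) (Fin dS) ℂ :=
      (hψpsd.1.eigenvectorUnitary : Matrix (Fin dS) (Fin dS) ℂ) with hW
    have hWmem : W ∈ Matrix.unitaryGroup (Fin dS) ℂ := hψpsd.1.eigenvectorUnitary.2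
    set D' : Matrix (Fin dS) (Fin dS) ℂ := Matrix.diagonal (RCLike.ofReal ∘ lam') with hD'
    have hWspec : coherentOp q U ρ = W * D' * Wᴴ := by
      rw [hW, hD', hlam', ← Matrix.star_eq_conjTranspose]
      exact hψpsd.1.spectral_theorem
    set χ : Matrix (Fin dS) (Fin dS) ℂ :=
      Matrix.diagonal (fun t => if t ∈ s then (1 : ℂ) else 0) with hχ
    set χ2 : Matrix (Fin dS) (Fin dS) ℂ :=
      Matrix.diagonal (fun t => if t ∈ s then (0 : ℂ) else 1) with hχ2
    set Pr : Matrix (Fin dS) (Fin dS) ℂ := W * χ * Wᴴ with hPr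
    have hWW : Wᴴ * W = 1 := by
      simpa [Matrix.star_eq_conjTranspose] using Matrix.mem_unitaryGroup_iff'.mp hWmem
    have eq2 : (Pr * coherentOp q U ρ).trace = (χ * D').trace := by
      rw [hWspec, hPr]
      have hm : W * χ * Wᴴ * (W * D' * Wᴴ) = W * (χ * D') * Wᴴ := by
        simp only [Matrix.mul_assoc]
        rw [← Matrix.mul_assoc Wᴴ W, hWW, Matrix.one_mul]
      rw [hm, Matrix.trace_mul_cycle, hWW, Matrix.one_mul]
    have eq1 : (χ * D').trace = ((∑ t ∈ s, lam' t : ℝ) : ℂ) := by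
      rw [hχ, hD', Matrix.diagonal_mul_diagonal, Matrix.trace_diagonal, Complex.ofReal_sum]
      have hpt : ∀ i, (if i ∈ s then (1:ℂ) else 0) * (RCLike.ofReal ∘ lam') i
          = (if i ∈ s then ((lam' i : ℝ) : ℂ) else 0) := fun i => by
        by_cases h : i ∈ s <;> simp [h]
      rw [Finset.sum_congr rfl fun i _ => hpt i, Finset.sum_ite_mem, Finset.univ_inter]
    -- move to the big space
    set N : Matrix (Fin dS × Fin dM) (Fin dS × Fin dM) ℂ :=
      U * (V ⊗ₖ (1 : Matrix (Fin dM) (Fin dM) ℂ)) with hN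
    have hNmem : N ∈ Matrix.unitaryGroup (Fin dS × Fin dM) ℂ :=
      mul_mem hU (kron_one_mem_unitary hVmem)
    have hNN' : Nᴴ * N = 1 := by
      simpa [Matrix.star_eq_conjTranspose] using Matrix.mem_unitaryGroup_iff'.mp hNmem
    have hNN : N * Nᴴ = 1 := by
      simpa [Matrix.star_eq_conjTranspose] using Matrix.mem_unitaryGroup_iff.mp hNmem
    have hXdecomp : U * (ρ ⊗ₖ τC) * Uᴴ = N * Dμ * Nᴴ := by
      rw [hσdecomp, hN, Matrix.conjTranspose_mul]
      simp only [Matrix.mul_assoc]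
    have hWkT : (W ⊗ₖ (1 : Matrix (Fin dM) (Fin dM) ℂ))ᴴ
        = Wᴴ ⊗ₖ (1 : Matrix (Fin dM) (Fin dM) ℂ) := by
      rw [kron_conjTranspose, Matrix.conjTranspose_one]
    have hkron1 : Pr ⊗ₖ (1 : Matrix (Fin dM) (Fin dM) ℂ)
        = (W ⊗ₖ (1 : Matrix (Fin dM) (Fin dM) ℂ)) * (χ ⊗ₖ (1 : Matrix (Fin dM) (Fin dM) ℂ))
          * (W ⊗ₖ (1 : Matrix (Fin dM) (Fin dM) ℂ))ᴴ := by
      rw [hWkT, hPr]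
      conv_lhs => rw [show (1 : Matrix (Fin dM) (Fin dM) ℂ) = 1 * 1 * 1 by simp]
      rw [Matrix.mul_kronecker_mul, Matrix.mul_kronecker_mul]
    set L : Matrix (Fin dS × Fin dM) (Fin dS × Fin dM) ℂ :=
      (W ⊗ₖ (1 : Matrix (Fin dM) (Fin dM) ℂ))ᴴ * N with hL
    have hLmem : L ∈ Matrix.unitaryGroup (Fin dS × Fin dM) ℂ := by
      apply mul_mem _ hNmem
      rw [← Matrix.star_eq_conjTranspose]
      exact Unitary.star_mem (kron_one_mem_unitary hWmem)
    have hLL' : Lᴴ * L = 1 := by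
      simpa [Matrix.star_eq_conjTranspose] using Matrix.mem_unitaryGroup_iff'.mp hLmem
    have hLL : L * Lᴴ = 1 := by
      simpa [Matrix.star_eq_conjTranspose] using Matrix.mem_unitaryGroup_iff.mp hLmem
    have hLH : Lᴴ = Nᴴ * (W ⊗ₖ (1 : Matrix (Fin dM) (Fin dM) ℂ)) := by
      rw [hL, Matrix.conjTranspose_mul, Matrix.conjTranspose_conjTranspose]
    set R : Matrix (Fin dS × Fin dM) (Fin dS × Fin dM) ℂ :=
      Lᴴ * (χ ⊗ₖ (1 : Matrix (Fin dM) (Fin dM) ℂ)) * L with hR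
    set R2 : Matrix (Fin dS × Fin dM) (Fin dS × Fin dM) ℂ :=
      Lᴴ * (χ2 ⊗ₖ (1 : Matrix (Fin dM) (Fin dM) ℂ)) * L with hR2
    have hmat : (Pr ⊗ₖ (1 : Matrix (Fin dM) (Fin dM) ℂ)) * (N * Dμ * Nᴴ)
        = N * (R * Dμ) * Nᴴ := by
      rw [hkron1, hR, hLH, hL]
      simp only [Matrix.mul_assoc]
      rw [← Matrix.mul_assoc N Nᴴ, hNN, Matrix.one_mul]
    have eq4 : ((Pr ⊗ₖ (1 : Matrix (Fin dM) (Fin dM) ℂ)) * (U * (ρ ⊗ₖ τC) * Uᴴ)).trace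
        = (R * Dμ).trace := by
      rw [hXdecomp, hmat, Matrix.trace_mul_cycle, ← Matrix.mul_assoc, hNN', Matrix.one_mul]
    have eq3 : (Pr * coherentOp q U ρ).trace
        = ((Pr ⊗ₖ (1 : Matrix (Fin dM) (Fin dM) ℂ)) * (U * (ρ ⊗ₖ τC) * Uᴴ)).trace := by
      rw [hout]
      exact trace_mul_ptraceM Pr _
    have eq5 : (R * Dμ).trace = ∑ α, R α α * ((lam α.1 : ℂ) * (q α.2 : ℂ)) := by
      rw [hDμ, trace_mul_diagonal]
    -- χ kronecker diagonal form and PSD facts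
    have hχ_kron : χ ⊗ₖ (1 : Matrix (Fin dM) (Fin dM) ℂ)
        = Matrix.diagonal (fun α : Fin dS × Fin dM => if α.1 ∈ s then (1 : ℂ) else 0) := by
      rw [hχ, ← Matrix.diagonal_one, Matrix.diagonal_kronecker_diagonal]
      congr 1
      funext α
      by_cases h : α.1 ∈ s <;> simp [h]
    have hχ2_kron : χ2 ⊗ₖ (1 : Matrix (Fin dM) (Fin dM) ℂ)
        = Matrix.diagonal (fun α : Fin dS × Fin dM => if α.1 ∈ s then (0 : ℂ) else 1) := by
      rw [hχ2, ← Matrix.diagonal_one, Matrix.diagonal_kronecker_diagonal]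
      congr 1
      funext α
      by_cases h : α.1 ∈ s <;> simp [h]
    have hRpsd : R.PosSemidef := by
      rw [hR]
      apply Matrix.PosSemidef.conjTranspose_mul_mul_same _ L
      rw [hχ_kron, Matrix.posSemidef_diagonal_iff]
      intro α
      by_cases h : α.1 ∈ s <;> simp [h]
    have hR2psd : R2.PosSemidef := by
      rw [hR2]
      apply Matrix.PosSemidef.conjTranspose_mul_mul_same _ L
      rw [hχ2_kron, Matrix.posSemidef_diagonal_iff]
      intro α
      by_cases h : α.1 ∈ s <;> simp [h]
    have hχsum : χ + χ2 = 1 := by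
      have hfun : (fun t : Fin dS => (if t ∈ s then (1:ℂ) else 0) + (if t ∈ s then 0 else 1))
          = fun _ => (1:ℂ) := by
        funext t
        by_cases h : t ∈ s <;> simp [h]
      rw [hχ, hχ2, Matrix.diagonal_add, hfun, Matrix.diagonal_one]
    have hRsum : R + R2 = 1 := by
      rw [hR, hR2, ← Matrix.add_mul, ← Matrix.mul_add, ← Matrix.add_kronecker, hχsum,
        Matrix.one_kronecker_one, Matrix.mul_one, hLL']
    have htrR : R.trace = (k : ℂ) * (dM : ℂ) := by
      rw [hR, Matrix.trace_mul_cycle, hLL, Matrix.one_mul,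
        Matrix.trace_kronecker, Matrix.trace_one, hχ, Matrix.trace_diagonal]
      rw [Finset.sum_ite_mem, Finset.univ_inter]
      simp [hs]
    -- the weights
    set dd : Fin dS × Fin dM → ℝ := fun α => (R α α).re with hdd
    have hd0 : ∀ α, 0 ≤ dd α := fun α => psd_diag_re_nonneg hRpsd α
    have hd1 : ∀ α, dd α ≤ 1 := by
      intro α
      have h2 := psd_diag_re_nonneg hR2psd α
      have hsumα : R α α + R2 α α = 1 := by
        have := congrFun (congrFun hRsum α) α
        simpa [Matrix.add_apply, Matrix.one_apply] using this
      have := congrArg Complex.re hsumα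
      simp only [Complex.add_re, Complex.one_re] at this
      rw [hdd]
      dsimp only
      linarith
    have hdsum : ∑ α, dd α = ((k * dM : ℕ) : ℝ) := by
      have : (R.trace).re = ((k : ℝ)) * (dM : ℝ) := by
        rw [htrR]
        simp
      rw [hdd]
      have hre : (R.trace).re = ∑ α, (R α α).re := by
        rw [Matrix.trace]
        exact Complex.re_sum Finset.univ _
      rw [← hre, this]
      push_cast
      ring
    -- final identification
    have hfinal : ∑ t ∈ s, lam' t = ∑ α, dd α * (lam α.1 * q α.2) := by
      have hc : ((∑ t ∈ s, lam' t : ℝ) : ℂ) = ∑ α, R α α * ((lam α.1 : ℂ) * (q α.2 : ℂ)) := by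
        rw [← eq5, ← eq4, ← eq3, eq2, eq1]
      have := congrArg Complex.re hc
      rw [Complex.ofReal_re] at this
      rw [this, Complex.re_sum]
      refine Finset.sum_congr rfl fun α _ => ?_
      rw [← Complex.ofReal_mul]
      simp [Complex.mul_re, hdd]
    rw [hfinal]
    have hsub := hsub_of_maj hdS hg0 hg1 hρ.1 hmaj
    have := scalar_core hdM g hg0 hg1 lam hlam0 ?_ q hq0 hqsum hq_anti q0 hq_up hq_lo
      dd hd0 hd1 k hk1 hkS (by exact_mod_cast hdsum)
    · exact this
    · intro t
      exact hsub t

lemma seq_invariant {dS dM : ℕ} (hdS : 0 < dS) (hdM : 0 < dM)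
    {g : ℝ} (hg0 : 0 < g) (hg1 : g ≤ 1)
    (q : Fin dM → ℝ) (hq0 : ∀ t, 0 ≤ q t) (hqsum : ∑ t, q t = 1) (hq_anti : Antitone q)
    (q0 : ℝ) (hq_up : ∀ t, q t ≤ q0) (hq_lo : ∀ t, g * q0 ≤ q t) :
    ∀ (L : List (Matrix (Fin dS × Fin dM) (Fin dS × Fin dM) ℂ)),
      (∀ V ∈ L, V ∈ Matrix.unitaryGroup (Fin dS × Fin dM) ℂ) →
      ∀ ρ : Matrix (Fin dS) (Fin dS) ℂ, ρ.PosSemidef → ρ.trace = 1 →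
      IsMajorizedBy (eigVecDesc ρ) (pstar g dS) →
      (L.foldl (fun σ V => coherentOp q V σ) ρ).PosSemidef ∧
        (L.foldl (fun σ V => coherentOp q V σ) ρ).trace = 1 ∧
        IsMajorizedBy (eigVecDesc (L.foldl (fun σ V => coherentOp q V σ) ρ)) (pstar g dS) := by
  intro L
  induction L with
  | nil => intro _ ρ h1 h2 h3; exact ⟨h1, h2, h3⟩
  | cons V L ih =>
    intro hL ρ h1 h2 h3
    have hV := hL V List.mem_cons_self
    obtain ⟨c1, c2, c3⟩ := cycle_step hdS hdM hg0 hg1 q hq0 hqsum hq_anti q0 hq_up hq_lo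
      ρ h1 h2 h3 V hV
    exact ih (fun W hW => hL W (List.mem_cons_of_mem V hW)) (coherentOp q V ρ) c1 c2 c3


/-- Universal bound, any number of cycles. If the eigenvalue vector of `ρ` is
majorized by `p*(g, d_S)` with `g = e^{−β ℰ_max}`, then so is that of
`Λ_{U_n} ∘ ⋯ ∘ Λ_{U_1}(ρ)` for any sequence of unitaries. -/
theorem multi_cycle_bound {dS dM : ℕ} (hdS : 0 < dS) (hdM : 0 < dM)
    (β : ℝ) (hβ : 0 < β)
    (E : Fin dM → ℝ) (hmono : Monotone E) (hE0 : E ⟨0, hdM⟩ = 0)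
    (g : ℝ) (hg : g = Real.exp (-(β * E ⟨dM - 1, Nat.sub_lt hdM Nat.one_pos⟩)))
    (ρ : Matrix (Fin dS) (Fin dS) ℂ) (hρ : ρ.PosSemidef) (hρtr : ρ.trace = 1)
    (hmaj : IsMajorizedBy (eigVecDesc ρ) (pstar g dS))
    {n : ℕ} (hn : 1 ≤ n)
    (U : Fin n → Matrix (Fin dS × Fin dM) (Fin dS × Fin dM) ℂ)
    (hU : ∀ i, U i ∈ Matrix.unitaryGroup (Fin dS × Fin dM) ℂ) :
    IsMajorizedBy (eigVecDesc (coherentSeq (gibbsVec β E) U ρ)) (pstar g dS) := by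
  set Emax : Fin dM := ⟨dM - 1, Nat.sub_lt hdM Nat.one_pos⟩ with hEmax
  have hEtop : ∀ t : Fin dM, E t ≤ E Emax := by
    intro t
    apply hmono
    rw [Fin.le_def]
    have := t.isLt
    simp only [hEmax]
    omega
  have hE0le : ∀ t : Fin dM, E ⟨0, hdM⟩ ≤ E t := by
    intro t
    apply hmono
    rw [Fin.le_def]
    simp
  have hEmax0 : 0 ≤ E Emax := hE0 ▸ hE0le Emax
  have hg0 : 0 < g := hg ▸ Real.exp_pos _
  have hg1 : g ≤ 1 := by
    rw [hg, ← Real.exp_zero]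
    apply Real.exp_le_exp.mpr
    nlinarith
  set Zm : ℝ := ∑ t : Fin dM, Real.exp (-(β * E t)) with hZm
  have hZmpos : 0 < Zm :=
    Finset.sum_pos (fun t _ => Real.exp_pos _) (Finset.univ_nonempty_iff.mpr ⟨⟨0, hdM⟩⟩)
  set q : Fin dM → ℝ := gibbsVec β E with hq
  have hq0 : ∀ t, 0 ≤ q t := fun t => div_nonneg (Real.exp_pos _).le hZmpos.le
  have hqsum : ∑ t, q t = 1 := by
    rw [hq]
    unfold gibbsVec
    rw [← Finset.sum_div, div_self hZmpos.ne']
  have hq_anti : Antitone q := by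
    intro a b hab
    apply div_le_div_of_nonneg_right _ hZmpos.le
    apply Real.exp_le_exp.mpr
    have := hmono hab
    nlinarith
  set qz : ℝ := Real.exp 0 / Zm with hqz
  have hq_up : ∀ t, q t ≤ qz := by
    intro t
    rw [hq, hqz]
    unfold gibbsVec
    apply div_le_div_of_nonneg_right _ hZmpos.le
    apply Real.exp_le_exp.mpr
    have := hE0le t
    rw [hE0] at this
    nlinarith
  have hq_lo : ∀ t, g * qz ≤ q t := by
    intro t
    rw [hq, hqz, hg]
    unfold gibbsVec
    have h1 : Real.exp (-(β * E Emax)) * (Real.exp 0 / Zm)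
        = Real.exp (-(β * E Emax) + 0) / Zm := by
      rw [Real.exp_add]
      ring
    rw [h1]
    apply div_le_div_of_nonneg_right _ hZmpos.le
    apply Real.exp_le_exp.mpr
    have := hEtop t
    nlinarith
  have hmem : ∀ V ∈ List.ofFn U, V ∈ Matrix.unitaryGroup (Fin dS × Fin dM) ℂ := by
    intro V hV
    obtain ⟨i, rfl⟩ := List.mem_ofFn.mp hV
    exact hU i
  exact (seq_invariant hdS hdM hg0 hg1 q hq0 hqsum hq_anti qz hq_up hq_lo
    (List.ofFn U) hmem ρ hρ hρtr hmaj).2.2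
end

section
/- For every probability vector p ∈ ℝ^d with decreasing entries, the sequence of iterates B^n(p) converges in ℝ^d as n → ∞. -/
open Filter Topology Kronecker Matrix
open scoped ComplexOrder

noncomputable def msPref {d : ℕ} (q : Fin d → ℝ) (k : ℕ) : ℝ :=
  ∑ x ∈ Finset.univ.filter (fun x : Fin d => (x : ℕ) < k), q x

lemma msStrictMono_le {k d : ℕ} {g : Fin k → Fin d} (hg : StrictMono g) :
    ∀ m, ∀ i : Fin k, (i : ℕ) = m → m ≤ (g i : ℕ) := by
  intro m
  induction m with
  | zero => intro i _; omega
  | succ m ih =>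
    intro i hi
    have hm : m < k := by omega
    have h1 : (⟨m, hm⟩ : Fin k) < i := by rw [Fin.lt_def]; simp only [Fin.val_mk]; omega
    have h2 := hg h1
    have h3 := ih ⟨m, hm⟩ rfl
    rw [Fin.lt_def] at h2
    simp at h2 h3
    omega

lemma msPref_eq_castLE {d k : ℕ} (hk : k ≤ d) (u : Fin d → ℝ) :
    msPref u k = ∑ i : Fin k, u (Fin.castLE hk i) := by
  classical
  refine Finset.sum_bij' (fun x hx => (⟨(x : ℕ), by
      simp only [Finset.mem_filter] at hx; exact hx.2⟩ : Fin k))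
    (fun i _ => Fin.castLE hk i) ?_ ?_ ?_ ?_ ?_ <;> simp [Fin.lt_def]

lemma msCard_pref {d k : ℕ} :
    (Finset.univ.filter (fun x : Fin d => (x : ℕ) < k)).card = min k d := by
  classical
  rw [← Finset.card_image_of_injective _ Fin.val_injective]
  rw [show Finset.image Fin.val (Finset.univ.filter (fun x : Fin d => (x : ℕ) < k))
      = Finset.range (min k d) from ?_, Finset.card_range]
  ext m
  simp only [Finset.mem_image, Finset.mem_filter, Finset.mem_univ, true_and, Finset.mem_range]
  constructor
  · rintro ⟨x, hx, rfl⟩; have := x.isLt; omega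
  · intro hm; exact ⟨⟨m, by omega⟩, by simp; omega, rfl⟩

lemma msPref_min {d k : ℕ} (u : Fin d → ℝ) : msPref u (min k d) = msPref u k := by
  unfold msPref
  congr 1
  ext x
  have := x.isLt
  simp only [Finset.mem_filter, Finset.mem_univ, true_and]
  omega

lemma msSum_le_pref_of_antitone {d : ℕ} {u : Fin d → ℝ} (hu : Antitone u)
    (s : Finset (Fin d)) :
    ∑ x ∈ s, u x ≤ msPref u s.card := by
  classical
  have hk : s.card ≤ d := by simpa using s.card_le_univ
  set f := s.orderEmbOfFin rfl with hf
  have h1 : ∑ x ∈ s, u x = ∑ i : Fin s.card, u (f i) := by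
    rw [← Finset.sum_coe_sort s u]
    exact Fintype.sum_equiv (s.orderIsoOfFin rfl).symm _ _ (fun x => by
      congr 1
      rw [hf, ← Finset.coe_orderIsoOfFin_apply]
      simp)
  rw [h1, msPref_eq_castLE hk]
  refine Finset.sum_le_sum fun i _ => hu ?_
  rw [Fin.le_def]
  exact msStrictMono_le f.strictMono _ i rfl

lemma msSortDesc_antitone {d : ℕ} (q : Fin d → ℝ) : Antitone (sortDesc q) := by
  intro i j hij
  exact Tuple.monotone_sort q (Fin.rev_le_rev.mpr hij)

lemma msSortDesc_apply {d : ℕ} (q : Fin d → ℝ) (x : Fin d) :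
    q x = sortDesc q ((Fin.revPerm.trans (Tuple.sort q)).symm x) := by
  simp [sortDesc]

lemma msSortDesc_sum {d : ℕ} (q : Fin d → ℝ) : ∑ i, sortDesc q i = ∑ i, q i := by
  exact Fintype.sum_equiv (Fin.revPerm.trans (Tuple.sort q)) _ _ (fun i => rfl)

lemma msSortDesc_nonneg {d : ℕ} {q : Fin d → ℝ} (hq : ∀ i, 0 ≤ q i) (i : Fin d) :
    0 ≤ sortDesc q i := hq _

lemma msPref_le_sortDesc {d : ℕ} (q : Fin d → ℝ) (k : ℕ) :
    msPref q k ≤ msPref (sortDesc q) k := by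
  classical
  set e : Fin d ≃ Fin d := Fin.revPerm.trans (Tuple.sort q) with he
  set P := Finset.univ.filter (fun x : Fin d => (x : ℕ) < k) with hP
  have h1 : msPref q k = ∑ y ∈ P.image e.symm, sortDesc q y := by
    rw [Finset.sum_image (fun x _ y _ h => e.symm.injective h)]
    exact Finset.sum_congr rfl fun x _ => msSortDesc_apply q x
  rw [h1]
  calc ∑ y ∈ P.image e.symm, sortDesc q y
      ≤ msPref (sortDesc q) (P.image e.symm).card :=
        msSum_le_pref_of_antitone (msSortDesc_antitone q) _
    _ = msPref (sortDesc q) k := by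
        rw [Finset.card_image_of_injective _ e.symm.injective, hP, msCard_pref, msPref_min]


lemma msIndicator_sum {d : ℕ} (s : Finset (Fin d)) (j : Fin d) (c : ℝ) :
    ∑ x ∈ s, (if x = j then c else 0) = if j ∈ s then c else 0 :=
  Finset.sum_ite_eq' s j (fun _ => c)

lemma msStep {d : ℕ} {a b : ℝ} (hb : 0 < b) (hba : b ≤ a) (hab : a + b ≤ 1)
    (q : Fin d → ℝ) (hq : ∀ i, 0 ≤ q i) :
    (∀ i, 0 ≤ maxSwap a b q i) ∧ (∑ i, maxSwap a b q i = ∑ i, q i) ∧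
      ∀ k, msPref q k ≤ msPref (maxSwap a b q) k := by
  classical
  unfold maxSwap
  by_cases h : ∃ k : Fin d, 0 < delta a b q k ∧ ∀ i, delta a b q i ≤ delta a b q k
  · rw [dif_pos h]
    set kb := h.choose with hkb
    have hspec := h.choose_spec
    have hk0 : (kb : ℕ) ≠ 0 := by
      intro h0
      have : delta a b q kb = 0 := by rw [delta, if_pos h0]
      rw [← hkb] at hspec
      rw [this] at hspec
      exact lt_irrefl 0 hspec.1
    set j : Fin d := ⟨(kb : ℕ) - 1, Nat.lt_of_le_of_lt (Nat.sub_le _ _) kb.isLt⟩ with hj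
    set D := delta a b q kb with hD
    have hDval : D = a * q kb - b * q j := by rw [hD, delta, if_neg hk0]
    have hDpos : 0 < D := hspec.1
    have hjk : j ≠ kb := by
      intro hjeq
      have : (j : ℕ) = (kb : ℕ) := by rw [hjeq]
      simp only [hj] at this
      omega
    set w : Fin d → ℝ := (fun i =>
        if i = kb then q kb - D
        else if (i : ℕ) = (kb : ℕ) - 1 then q i + D
        else q i) with hw
    have hweq : ∀ x, w x = q x + ((if x = j then D else 0) - (if x = kb then D else 0)) := by
      intro x
      by_cases hx : x = kb
      · subst hx
        rw [hw]
        simp only [if_pos rfl, if_neg (Ne.symm hjk), if_true]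
        ring
      · by_cases hx2 : x = j
        · subst hx2
          rw [hw]
          simp only [if_neg hx, hj]
          simp [hjk, ← hj]
        · have hx3 : (x : ℕ) ≠ (kb : ℕ) - 1 := by
            intro hc
            exact hx2 (Fin.ext (by simp [hj, hc]))
          rw [hw]
          simp [hx, hx2, hx3]
    have hwnn : ∀ i, 0 ≤ w i := by
      intro i
      rw [hw]
      by_cases hi : i = kb
      · simp only [if_pos hi]
        rw [hDval]
        have h1 := hq kb
        have h2 := hq j
        have ha1 : a ≤ 1 := by linarith
        nlinarith
      · simp only [if_neg hi]
        by_cases hi2 : (i : ℕ) = (kb : ℕ) - 1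
        · simp only [if_pos hi2]
          have := hq i
          linarith
        · simp only [if_neg hi2]; exact hq i
    have hwsum : ∑ i, w i = ∑ i, q i := by
      rw [Finset.sum_congr rfl (fun x _ => hweq x)]
      rw [Finset.sum_add_distrib, Finset.sum_sub_distrib, msIndicator_sum, msIndicator_sum]
      simp
    have hwpref : ∀ k, msPref q k ≤ msPref w k := by
      intro k
      unfold msPref
      rw [Finset.sum_congr rfl (fun x _ => hweq x)]
      rw [Finset.sum_add_distrib, Finset.sum_sub_distrib, msIndicator_sum, msIndicator_sum]
      simp only [Finset.mem_filter, Finset.mem_univ, true_and]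
      by_cases hkk : (kb : ℕ) < k
      · have hjj : (j : ℕ) < k := by simp only [hj]; omega
        rw [if_pos hjj, if_pos hkk]
        simp
      · rw [if_neg hkk]
        by_cases hjj : (j : ℕ) < k
        · rw [if_pos hjj]; linarith
        · rw [if_neg hjj]; simp
    exact ⟨fun i => msSortDesc_nonneg hwnn i,
      by rw [msSortDesc_sum]; exact hwsum,
      fun k => le_trans (le_trans (hwpref k) (le_of_eq rfl)) (msPref_le_sortDesc w k)⟩
  · rw [dif_neg h]
    exact ⟨hq, rfl, fun k => le_refl _⟩

lemma msPref_succ {d : ℕ} (q : Fin d → ℝ) (i : Fin d) :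
    msPref q ((i : ℕ) + 1) = msPref q (i : ℕ) + q i := by
  unfold msPref
  have hset : Finset.univ.filter (fun x : Fin d => (x : ℕ) < (i : ℕ) + 1)
      = insert i (Finset.univ.filter (fun x : Fin d => (x : ℕ) < (i : ℕ))) := by
    ext x
    simp only [Finset.mem_filter, Finset.mem_univ, true_and, Finset.mem_insert]
    constructor
    · intro hx
      rcases Nat.lt_succ_iff_lt_or_eq.mp hx with h | h
      · right; exact h
      · left; exact Fin.ext h
    · rintro (rfl | hx) <;> omega
  rw [hset, Finset.sum_insert (by simp)]
  ring


/-- For a decreasing probability vector `p`, the iterates `B^n(p)` converge. -/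
theorem maxSwap_iterates_converge {d : ℕ} (hd : 2 ≤ d)
    (a b : ℝ) (hb : 0 < b) (hba : b ≤ a) (hab : a + b ≤ 1)
    (p : Fin d → ℝ) (hnn : ∀ i, 0 ≤ p i) (hsum : ∑ i, p i = 1) (hdec : Antitone p) :
    ∃ L : Fin d → ℝ,
      Filter.Tendsto (fun n : ℕ => (maxSwap a b)^[n] p) Filter.atTop (nhds L) := by

  set q : ℕ → Fin d → ℝ := fun n => (maxSwap a b)^[n] p with hqdef
  have hsucc : ∀ n, q (n + 1) = maxSwap a b (q n) := fun n =>
    Function.iterate_succ_apply' _ _ _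
  have hinv : ∀ n, (∀ i, 0 ≤ q n i) ∧ ∑ i, q n i = 1 := by
    intro n
    induction n with
    | zero => exact ⟨hnn, hsum⟩
    | succ n ih =>
      have hstep := msStep hb hba hab (q n) ih.1
      rw [hsucc n]
      exact ⟨hstep.1, hstep.2.1.trans ih.2⟩
  have hmono : ∀ k, Monotone (fun n => msPref (q n) k) := by
    intro k
    apply monotone_nat_of_le_succ
    intro n
    rw [hsucc n]
    exact (msStep hb hba hab (q n) (hinv n).1).2.2 k
  have hbdd : ∀ k n, msPref (q n) k ≤ 1 := by
    intro k n
    rw [← (hinv n).2]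
    exact Finset.sum_le_sum_of_subset_of_nonneg (Finset.filter_subset _ _)
      (fun i _ _ => (hinv n).1 i)
  have htend : ∀ k, Filter.Tendsto (fun n => msPref (q n) k) Filter.atTop
      (nhds (⨆ n, msPref (q n) k)) := by
    intro k
    refine tendsto_atTop_ciSup (hmono k) ⟨1, ?_⟩
    rintro x ⟨n, rfl⟩
    exact hbdd k n
  refine ⟨fun i => (⨆ n, msPref (q n) ((i : ℕ) + 1)) - ⨆ n, msPref (q n) (i : ℕ), ?_⟩
  rw [tendsto_pi_nhds]
  intro i
  have hco : ∀ n : ℕ, q n i = msPref (q n) ((i : ℕ) + 1) - msPref (q n) (i : ℕ) := by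
    intro n
    rw [msPref_succ]
    ring
  simp only [hco]
  exact (htend _).sub (htend _)
end

section
/- For every probability vector p ∈ ℝ^d with decreasing entries, the limit p^∞ = lim_{n→∞} B^n(p) exists and is a fixed point of B; that is, Δ_i(p^∞) ≤ 0 for all i = 1,…,d−1, so B(p^∞) = p^∞. -/
open Filter Topology Kronecker Matrix
open scoped ComplexOrder

lemma maxSwap_neg' {d : ℕ} (a b : ℝ) (p : Fin d → ℝ)
    (h : ¬ ∃ k : Fin d, 0 < delta a b p k ∧ ∀ i, delta a b p i ≤ delta a b p k) :
    maxSwap a b p = p := by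
  unfold maxSwap
  rw [dif_neg h]

lemma sortDesc_antitone' {n : ℕ} (v : Fin n → ℝ) : Antitone (sortDesc v) := by
  intro i j hij
  exact Tuple.monotone_sort v (Fin.rev_le_rev.mpr hij)

lemma sum_sortDesc' {n : ℕ} (v : Fin n → ℝ) : ∑ i, sortDesc v i = ∑ i, v i :=
  Equiv.sum_comp ((Fin.revPerm).trans (Tuple.sort v)) v

noncomputable def Pk {d : ℕ} (q : Fin d → ℝ) (k : ℕ) : ℝ :=
  ∑ i ∈ Finset.univ.filter (fun i : Fin d => (i : ℕ) < k), q i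

lemma strictMono_val_le' {k d : ℕ} (f : Fin k → Fin d) (hf : StrictMono f) :
    ∀ j : Fin k, (j : ℕ) ≤ (f j : ℕ) := by
  intro j
  induction' hj : (j : ℕ) with n ih generalizing j
  · exact Nat.zero_le _
  · have hn : n < k := by omega
    have h1 := ih ⟨n, hn⟩ rfl
    have hlt : f ⟨n, hn⟩ < f j := hf (by simp [Fin.lt_def, hj])
    simp only [Fin.lt_def] at hlt
    omega

lemma sum_le_prefix' {d : ℕ} (w : Fin d → ℝ) (hw : Antitone w) (hnn : ∀ i, 0 ≤ w i)
    (s : Finset (Fin d)) (k : ℕ) (hsk : s.card ≤ k) :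
    ∑ i ∈ s, w i ≤ Pk w k := by
  classical
  set K := s.card with hK
  have hKd : K ≤ d := by simpa using s.card_le_univ
  have h1 : ∑ i ∈ s, w i = ∑ j : Fin K, w (s.orderEmbOfFin hK.symm j) := by
    rw [← Finset.sum_coe_sort s w]
    refine (Fintype.sum_equiv (s.orderIsoOfFin hK.symm).toEquiv _ _ fun j => ?_).symm
    simp [Finset.orderEmbOfFin_apply]
  rw [h1]
  have h2 : ∀ j : Fin K, w (s.orderEmbOfFin hK.symm j) ≤ w (Fin.castLE hKd j) := by
    intro j
    apply hw
    have := strictMono_val_le' (fun j => s.orderEmbOfFin hK.symm j)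
      (fun x y h => (s.orderEmbOfFin hK.symm).strictMono h) j
    exact Fin.le_def.mpr (by simpa using this)
  calc ∑ j : Fin K, w (s.orderEmbOfFin hK.symm j) ≤ ∑ j : Fin K, w (Fin.castLE hKd j) :=
        Finset.sum_le_sum fun j _ => h2 j
    _ = ∑ i ∈ Finset.univ.image (fun j : Fin K => Fin.castLE hKd j), w i :=
        (Finset.sum_image fun x _ y _ hxy => Fin.castLE_injective hKd hxy).symm
    _ ≤ Pk w k := by
        apply Finset.sum_le_sum_of_subset_of_nonneg
        · intro x hx
          simp only [Finset.mem_image, Finset.mem_univ, true_and] at hx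
          obtain ⟨j, rfl⟩ := hx
          simp only [Pk, Finset.mem_filter, Finset.mem_univ, true_and]
          exact lt_of_lt_of_le (by simpa using j.isLt) hsk
        · intro i _ _; exact hnn i

lemma prefix_le_sortDesc' {d : ℕ} (v : Fin d → ℝ) (hnn : ∀ i, 0 ≤ v i) (k : ℕ) :
    Pk v k ≤ Pk (sortDesc v) k := by
  classical
  set σ : Equiv.Perm (Fin d) := (Fin.revPerm).trans (Tuple.sort v) with hσ
  have hv : ∀ i, v i = sortDesc v (σ.symm i) := by
    intro i
    show v i = v (σ (σ.symm i))
    rw [Equiv.apply_symm_apply]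
  set T := Finset.univ.filter (fun i : Fin d => (i : ℕ) < k) with hT
  have h1 : Pk v k = ∑ i ∈ T.image σ.symm, sortDesc v i := by
    rw [Finset.sum_image (fun x _ y _ h => σ.symm.injective h)]
    exact Finset.sum_congr rfl fun i _ => hv i
  rw [h1]
  apply sum_le_prefix' (sortDesc v) (sortDesc_antitone' v)
    (fun i => by rw [show sortDesc v i = v _ from rfl]; exact hnn _)
  rw [Finset.card_image_of_injective _ σ.symm.injective]
  calc T.card ≤ (Finset.range k).card := by
        refine Finset.card_le_card_of_injOn (fun i => (i : ℕ)) ?_ ?_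
        · intro i hi; simpa [hT] using hi
        · intro x _ y _ h; exact Fin.val_injective h
    _ = k := Finset.card_range k

section swapfacts

variable {d : ℕ} (a b : ℝ) (q : Fin d → ℝ)

noncomputable def swapVec (kb : Fin d) : Fin d → ℝ :=
  Function.update (Function.update q
    ⟨(kb : ℕ) - 1, Nat.lt_of_le_of_lt (Nat.sub_le _ _) kb.isLt⟩
    (q ⟨(kb : ℕ) - 1, Nat.lt_of_le_of_lt (Nat.sub_le _ _) kb.isLt⟩ + delta a b q kb))
    kb (q kb - delta a b q kb)

lemma swapVec_eq (kb : Fin d) (hkb : (kb : ℕ) ≠ 0) :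
    (fun i => if i = kb then q kb - delta a b q kb
      else if (i : ℕ) = (kb : ℕ) - 1 then q i + delta a b q kb
      else q i) = swapVec a b q kb := by
  funext i
  set j : Fin d := ⟨(kb : ℕ) - 1, Nat.lt_of_le_of_lt (Nat.sub_le _ _) kb.isLt⟩ with hj
  have hjval : (j : ℕ) = (kb : ℕ) - 1 := rfl
  have hjk : j ≠ kb := by simp only [Ne, Fin.ext_iff]; omega
  by_cases h1 : i = kb
  · subst h1; simp [swapVec, Function.update_self]
  · by_cases h2 : (i : ℕ) = (kb : ℕ) - 1
    · have : i = j := by simp [Fin.ext_iff, hj, h2]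
      subst this
      simp +zetaDelta [swapVec, Function.update_of_ne h1, Function.update_self, if_neg h1]
    · have hij : i ≠ j := by simp [Fin.ext_iff, hj]; omega
      simp +zetaDelta [swapVec, Function.update_of_ne h1, Function.update_of_ne hij, if_neg h1, if_neg h2]

lemma delta_pos_ne_zero {kb : Fin d} (h : 0 < delta a b q kb) : (kb : ℕ) ≠ 0 := by
  intro h0
  simp [delta, h0] at h

lemma swapVec_sum (kb : Fin d) (hkb : (kb : ℕ) ≠ 0) :
    ∑ i, swapVec a b q kb i = ∑ i, q i := by
  classical
  set j : Fin d := ⟨(kb : ℕ) - 1, Nat.lt_of_le_of_lt (Nat.sub_le _ _) kb.isLt⟩ with hj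
  have hjval : (j : ℕ) = (kb : ℕ) - 1 := rfl
  have hjk : j ≠ kb := by simp only [Ne, Fin.ext_iff]; omega
  rw [show swapVec a b q kb = Function.update (Function.update q j
      (q j + delta a b q kb)) kb (q kb - delta a b q kb) from rfl]
  rw [Finset.sum_update_of_mem (Finset.mem_univ kb)]
  rw [Finset.sum_update_of_mem (by simp [hjk] : j ∈ Finset.univ \ {kb})]
  rw [Finset.sum_eq_add_sum_sdiff_singleton_of_mem (Finset.mem_univ kb) q,
    Finset.sum_eq_add_sum_sdiff_singleton_of_mem (by simp [hjk] : j ∈ Finset.univ \ {kb}) q]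
  ring

lemma swapVec_nonneg (ha : a ≤ 1) (hb : 0 < b) (hnn : ∀ i, 0 ≤ q i)
    (kb : Fin d) (hkb : 0 < delta a b q kb) :
    ∀ i, 0 ≤ swapVec a b q kb i := by
  intro i
  have hk0 := delta_pos_ne_zero a b q hkb
  set j : Fin d := ⟨(kb : ℕ) - 1, Nat.lt_of_le_of_lt (Nat.sub_le _ _) kb.isLt⟩ with hj
  have hjval : (j : ℕ) = (kb : ℕ) - 1 := rfl
  have hjk : j ≠ kb := by simp only [Ne, Fin.ext_iff]; omega
  have e1 : swapVec a b q kb kb = q kb - delta a b q kb := Function.update_self _ _ _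
  have e2 : swapVec a b q kb j = q j + delta a b q kb := by
    show Function.update (Function.update q j (q j + delta a b q kb)) kb
      (q kb - delta a b q kb) j = _
    rw [Function.update_of_ne hjk, Function.update_self]
  by_cases h1 : i = kb
  · rw [h1, e1]
    have hd : delta a b q kb = a * q kb - b * q j := by simp [delta, hk0, hj]
    have := hnn kb; have := hnn j
    nlinarith
  · by_cases h2 : i = j
    · rw [h2, e2]
      have := hnn j
      linarith
    · have e3 : swapVec a b q kb i = q i := by
        show Function.update (Function.update q j (q j + delta a b q kb)) kb
          (q kb - delta a b q kb) i = _
        rw [Function.update_of_ne h1, Function.update_of_ne h2]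
      rw [e3]; exact hnn i

lemma swapVec_Pk (kb : Fin d) (hkb : (kb : ℕ) ≠ 0) (k : ℕ) :
    Pk (swapVec a b q kb) k
      = Pk q k + (if (kb:ℕ) - 1 < k ∧ ¬ ((kb:ℕ) < k) then delta a b q kb else 0) := by
  classical
  set j : Fin d := ⟨(kb : ℕ) - 1, Nat.lt_of_le_of_lt (Nat.sub_le _ _) kb.isLt⟩ with hj
  have hjval : (j : ℕ) = (kb : ℕ) - 1 := rfl
  have hjk : j ≠ kb := by simp only [Ne, Fin.ext_iff]; omega
  set T := Finset.univ.filter (fun i : Fin d => (i : ℕ) < k) with hT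
  have hmemT : ∀ i : Fin d, i ∈ T ↔ (i : ℕ) < k := by intro i; simp [hT]
  rw [show swapVec a b q kb = Function.update (Function.update q j
      (q j + delta a b q kb)) kb (q kb - delta a b q kb) from rfl]
  show (∑ i ∈ T, _) = (∑ i ∈ T, q i) + _
  by_cases hkT : kb ∈ T
  · have hjT : j ∈ T := by rw [hmemT]; rw [hmemT] at hkT; omega
    rw [Finset.sum_update_of_mem hkT,
      Finset.sum_update_of_mem (by simp [Finset.mem_sdiff, hjT, hjk] : j ∈ T \ {kb}),
      Finset.sum_eq_add_sum_sdiff_singleton_of_mem hkT q,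
      Finset.sum_eq_add_sum_sdiff_singleton_of_mem
        (by simp [Finset.mem_sdiff, hjT, hjk] : j ∈ T \ {kb}) q]
    have hcond : ¬ ((kb:ℕ) - 1 < k ∧ ¬ ((kb:ℕ) < k)) := by rw [hmemT] at hkT; omega
    rw [if_neg hcond]
    ring
  · rw [Finset.sum_update_of_notMem hkT]
    by_cases hjT : j ∈ T
    · rw [Finset.sum_update_of_mem hjT, Finset.sum_eq_add_sum_sdiff_singleton_of_mem hjT q]
      have hcond : ((kb:ℕ) - 1 < k ∧ ¬ ((kb:ℕ) < k)) := by
        rw [hmemT] at hjT hkT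
        exact ⟨by omega, hkT⟩
      rw [if_pos hcond]
      ring
    · rw [Finset.sum_update_of_notMem hjT]
      have hcond : ¬ ((kb:ℕ) - 1 < k ∧ ¬ ((kb:ℕ) < k)) := by
        rw [hmemT] at hjT hkT
        push_neg
        intro hcc; omega
      rw [if_neg hcond]
      ring

end swapfacts

lemma maxSwap_facts {d : ℕ} (hd0 : 0 < d) (a b : ℝ) (ha : a ≤ 1) (hb : 0 < b)
    (q : Fin d → ℝ) (hnn : ∀ i, 0 ≤ q i) :
    (∀ i, 0 ≤ maxSwap a b q i) ∧ (∑ i, maxSwap a b q i = ∑ i, q i) ∧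
    (∀ k, Pk q k ≤ Pk (maxSwap a b q) k) ∧
    (∀ i, delta a b q i ≤
      ∑ k ∈ Finset.range (d+1), (Pk (maxSwap a b q) k - Pk q k)) := by
  classical
  by_cases h : ∃ k : Fin d, 0 < delta a b q k ∧ ∀ i, delta a b q i ≤ delta a b q k
  · obtain ⟨hk1, hk2⟩ := h.choose_spec
    have hkb0 : (h.choose : ℕ) ≠ 0 := delta_pos_ne_zero a b q hk1
    have hM : maxSwap a b q = sortDesc (swapVec a b q h.choose) := by
      unfold maxSwap
      rw [dif_pos h, swapVec_eq a b q h.choose hkb0]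
    have hwnn := swapVec_nonneg a b q ha hb hnn h.choose hk1
    have hsnn : ∀ i, 0 ≤ maxSwap a b q i := by
      intro i
      rw [hM]
      exact hwnn _
    have hPk : ∀ k, Pk q k ≤ Pk (maxSwap a b q) k := by
      intro k
      rw [hM]
      calc Pk q k ≤ Pk (swapVec a b q h.choose) k := by
            rw [swapVec_Pk a b q h.choose hkb0 k]
            split_ifs with hc
            · linarith
            · simp
        _ ≤ Pk (sortDesc (swapVec a b q h.choose)) k :=
            prefix_le_sortDesc' _ hwnn k
    refine ⟨hsnn, ?_, hPk, ?_⟩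
    · rw [hM, sum_sortDesc', swapVec_sum a b q h.choose hkb0]
    · intro i
      have hkey : delta a b q h.choose
          ≤ Pk (maxSwap a b q) (h.choose : ℕ) - Pk q (h.choose : ℕ) := by
        have h1 : Pk (swapVec a b q h.choose) (h.choose : ℕ)
            = Pk q (h.choose : ℕ) + delta a b q h.choose := by
          rw [swapVec_Pk a b q h.choose hkb0]
          rw [if_pos ⟨by omega, by omega⟩]
        have h2 : Pk (swapVec a b q h.choose) (h.choose : ℕ)
            ≤ Pk (maxSwap a b q) (h.choose : ℕ) := by
          rw [hM]
          exact prefix_le_sortDesc' _ hwnn _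
        linarith
      calc delta a b q i ≤ delta a b q h.choose := hk2 i
        _ ≤ Pk (maxSwap a b q) (h.choose : ℕ) - Pk q (h.choose : ℕ) := hkey
        _ ≤ ∑ k ∈ Finset.range (d+1), (Pk (maxSwap a b q) k - Pk q k) := by
            refine Finset.single_le_sum (f := fun k => Pk (maxSwap a b q) k - Pk q k)
              (fun k _ => sub_nonneg.mpr (hPk k)) ?_
            simp only [Finset.mem_range]
            have := h.choose.isLt
            omega
  · have hM : maxSwap a b q = q := by unfold maxSwap; rw [dif_neg h]
    refine ⟨by rw [hM]; exact hnn, by rw [hM], fun k => le_of_eq (by rw [hM]), ?_⟩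
    intro i
    have : Nonempty (Fin d) := ⟨⟨0, hd0⟩⟩
    obtain ⟨k0, hk0⟩ := Finite.exists_max (delta a b q)
    have h1 : delta a b q k0 ≤ 0 := not_lt.mp fun hpos => h ⟨k0, hpos, hk0⟩
    have h2 : delta a b q i ≤ 0 := le_trans (hk0 i) h1
    rw [hM]
    simpa using h2

lemma Pk_succ {d : ℕ} (q : Fin d → ℝ) (i : Fin d) :
    Pk q ((i : ℕ) + 1) = q i + Pk q (i : ℕ) := by
  classical
  have hset : Finset.univ.filter (fun x : Fin d => (x : ℕ) < (i : ℕ) + 1)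
      = insert i (Finset.univ.filter (fun x : Fin d => (x : ℕ) < (i : ℕ))) := by
    ext x
    simp only [Finset.mem_filter, Finset.mem_univ, true_and, Finset.mem_insert, Fin.ext_iff]
    omega
  show (∑ i ∈ _, q i) = _
  rw [hset, Finset.sum_insert (by simp)]
  rfl


open Filter Topology in
/-- The limit `p^∞` of the iterates `B^n(p)` exists and is a fixed point of `B`:
`Δ_i(p^∞) ≤ 0` for all `i = 1,…,d−1`, so `B(p^∞) = p^∞`. -/
theorem maxSwap_limit_is_fixed_point {d : ℕ} (hd : 2 ≤ d)
    (a b : ℝ) (hb : 0 < b) (hba : b ≤ a) (hab : a + b ≤ 1)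
    (p : Fin d → ℝ) (hnn : ∀ i, 0 ≤ p i) (hsum : ∑ i, p i = 1) (hdec : Antitone p) :
    ∃ L : Fin d → ℝ,
      Filter.Tendsto (fun n : ℕ => (maxSwap a b)^[n] p) Filter.atTop (nhds L) ∧
      (∀ i : Fin d, (i : ℕ) ≠ 0 → delta a b L i ≤ 0) ∧
      maxSwap a b L = L := by
  classical
  have hd0 : 0 < d := by omega
  have ha1 : a ≤ 1 := by linarith
  set P : ℕ → Fin d → ℝ := fun n => (maxSwap a b)^[n] p with hP
  have hinv : ∀ n, (∀ i, 0 ≤ P n i) ∧ ∑ i, P n i = 1 := by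
    intro n
    induction n with
    | zero => exact ⟨hnn, hsum⟩
    | succ n ih =>
      have hstep := maxSwap_facts hd0 a b ha1 hb (P n) ih.1
      refine ⟨?_, ?_⟩
      · intro i
        show 0 ≤ (maxSwap a b)^[n+1] p i
        rw [Function.iterate_succ_apply']
        exact hstep.1 i
      · show ∑ i, (maxSwap a b)^[n+1] p i = 1
        rw [Function.iterate_succ_apply']
        rw [show (maxSwap a b ((maxSwap a b)^[n] p)) = maxSwap a b (P n) from rfl]
        rw [hstep.2.1]
        exact ih.2
  set S : ℕ → ℕ → ℝ := fun n k => Pk (P n) k with hS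
  have hPsucc : ∀ n, P (n+1) = maxSwap a b (P n) := by
    intro n
    show (maxSwap a b)^[n+1] p = _
    rw [Function.iterate_succ_apply']
  have hmono : ∀ k, Monotone fun n => S n k := by
    intro k
    apply monotone_nat_of_le_succ
    intro n
    show Pk (P n) k ≤ Pk (P (n+1)) k
    rw [hPsucc n]
    exact (maxSwap_facts hd0 a b ha1 hb (P n) (hinv n).1).2.2.1 k
  have hbdd : ∀ n k, S n k ≤ 1 := by
    intro n k
    show Pk (P n) k ≤ 1
    rw [← (hinv n).2]
    exact Finset.sum_le_sum_of_subset_of_nonneg (Finset.filter_subset _ _)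
      (fun i _ _ => (hinv n).1 i)
  set c : ℕ → ℝ := fun k => ⨆ n, S n k with hc
  have hconv : ∀ k, Tendsto (fun n => S n k) atTop (nhds (c k)) := by
    intro k
    apply tendsto_atTop_ciSup (hmono k)
    exact ⟨1, fun x ⟨n, hn⟩ => hn ▸ hbdd n k⟩
  have hPS : ∀ (n : ℕ) (i : Fin d), P n i = S n ((i : ℕ) + 1) - S n (i : ℕ) := by
    intro n i
    show P n i = Pk (P n) ((i : ℕ) + 1) - Pk (P n) (i : ℕ)
    rw [Pk_succ]
    ring
  set L : Fin d → ℝ := fun i => c ((i : ℕ) + 1) - c (i : ℕ) with hL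
  have hLim : ∀ i, Tendsto (fun n => P n i) atTop (nhds (L i)) := by
    intro i
    have := (hconv ((i : ℕ) + 1)).sub (hconv (i : ℕ))
    exact this.congr fun n => (hPS n i).symm
  have hT : Tendsto (fun n : ℕ => (maxSwap a b)^[n] p) atTop (nhds L) :=
    tendsto_pi_nhds.mpr hLim
  have hDconv : Tendsto (fun n => ∑ k ∈ Finset.range (d+1), (S (n+1) k - S n k))
      atTop (nhds 0) := by
    have h1 : ∀ k ∈ Finset.range (d+1),
        Tendsto (fun n => S (n+1) k - S n k) atTop (nhds (c k - c k)) := by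
      intro k _
      exact ((hconv k).comp (tendsto_add_atTop_nat 1)).sub (hconv k)
    have := tendsto_finset_sum (Finset.range (d+1)) h1
    simpa using this
  have hDelta : ∀ (n : ℕ) (i : Fin d), delta a b (P n) i
      ≤ ∑ k ∈ Finset.range (d+1), (S (n+1) k - S n k) := by
    intro n i
    have := (maxSwap_facts hd0 a b ha1 hb (P n) (hinv n).1).2.2.2 i
    convert this using 2 with k
    simp only [hS]
    rw [hPsucc n]
  have hfix0 : ∀ i : Fin d, (i : ℕ) ≠ 0 → delta a b L i ≤ 0 := by
    intro i hi
    have hcd : Tendsto (fun n => delta a b (P n) i) atTop (nhds (delta a b L i)) := by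
      simp only [delta, if_neg hi]
      exact ((hLim i).const_mul a).sub
        ((hLim ⟨(i : ℕ) - 1, Nat.lt_of_le_of_lt (Nat.sub_le _ _) i.isLt⟩).const_mul b)
    exact le_of_tendsto_of_tendsto' hcd hDconv fun n => hDelta n i
  have hfixL : maxSwap a b L = L := by
    apply maxSwap_neg'
    rintro ⟨k, hk1, -⟩
    by_cases hk : (k : ℕ) = 0
    · simp [delta, hk] at hk1
    · exact absurd hk1 (not_lt.mpr (hfix0 k hk))
  exact ⟨L, hT, hfix0, hfixL⟩
end

section
/- Let a ≥ b > 0 with a + b ≤ 1 and g = b/a. If a probability vector f ∈ ℝ^d with decreasing entries satisfies a·f_i ≤ b·f_{i−1} for all i = 1,…,d−1 (i.e., f is a fixed point of the max-swap map B), then f majorizes p*(g,d). -/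
open Filter Topology Kronecker Matrix
open scoped ComplexOrder

private lemma strictMono_nat_le' {k : ℕ} (m : Fin k → ℕ) (hm : StrictMono m) :
    ∀ (j : ℕ) (h : j < k), j ≤ m ⟨j, h⟩ := by
  intro j
  induction j with
  | zero => intro h; exact Nat.zero_le _
  | succ n ih =>
    intro h
    have h' : n < k := Nat.lt_of_succ_lt h
    have := hm (show (⟨n, h'⟩ : Fin k) < ⟨n+1, h⟩ by simp [Fin.lt_def])
    have := ih h'
    omega

private lemma subset_sum_le_topk' {d k : ℕ} (hk : k ≤ d) (v : Fin d → ℝ) (hv : Antitone v)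
    (s : Finset (Fin d)) (hs : s.card = k) :
    ∑ i ∈ s, v i ≤ ∑ i : Fin k, v (Fin.castLE hk i) := by
  classical
  have hsum : ∑ i ∈ s, v i = ∑ i : Fin k, v (s.orderIsoOfFin hs i) := by
    rw [← Finset.sum_attach s (fun x => v x)]
    exact Fintype.sum_equiv (s.orderIsoOfFin hs).toEquiv.symm _ _ (by intro x; simp)
  rw [hsum]
  apply Finset.sum_le_sum
  intro i _
  apply hv
  have hmono : StrictMono (fun i : Fin k => ((s.orderIsoOfFin hs i : Fin d) : ℕ)) := by
    intro x y hxy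
    exact_mod_cast (s.orderIsoOfFin hs).strictMono hxy
  have := strictMono_nat_le' _ hmono i i.isLt
  simp only [Fin.le_def, Fin.coe_castLE]
  simpa using this

private lemma sumKLargest_eq_topk' {d k : ℕ} (hk : k ≤ d) (v : Fin d → ℝ) (hv : Antitone v) :
    sumKLargest v k = ∑ i : Fin k, v (Fin.castLE hk i) := by
  classical
  have hmem : (∑ i : Fin k, v (Fin.castLE hk i)) ∈
      {x : ℝ | ∃ s : Finset (Fin d), s.card = k ∧ ∑ i ∈ s, v i = x} := by
    refine ⟨Finset.univ.map (Fin.castLEEmb hk), ?_, ?_⟩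
    · simp
    · rw [Finset.sum_map]; rfl
  have hbdd : BddAbove {x : ℝ | ∃ s : Finset (Fin d), s.card = k ∧ ∑ i ∈ s, v i = x} := by
    apply (Set.finite_range (fun s : Finset (Fin d) => ∑ i ∈ s, v i)).bddAbove.mono
    rintro x ⟨s, _, rfl⟩
    exact ⟨s, rfl⟩
  apply le_antisymm
  · apply csSup_le ⟨_, hmem⟩
    rintro x ⟨s, hs, rfl⟩
    exact subset_sum_le_topk' hk v hv s hs
  · exact le_csSup hbdd hmem

/-- Every fixed point of the max-swap map (a decreasing probability vector `f`
with `a·f_i ≤ b·f_{i−1}` for all `i = 1,…,d−1`) majorizes `p*(g,d)` with `g = b/a`. -/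
theorem fixed_points_majorize_pstar {d : ℕ} (hd : 2 ≤ d)
    (a b : ℝ) (hb : 0 < b) (hba : b ≤ a) (hab : a + b ≤ 1)
    (f : Fin d → ℝ) (hnn : ∀ i, 0 ≤ f i) (hsum : ∑ i, f i = 1) (hdec : Antitone f)
    (hfix : ∀ i : Fin d, (i : ℕ) ≠ 0 →
      a * f i ≤ b * f ⟨(i : ℕ) - 1, Nat.lt_of_le_of_lt (Nat.sub_le _ _) i.isLt⟩) :
    IsMajorizedBy (pstar (b / a) d) f := by
    classical
  have ha : 0 < a := lt_of_lt_of_le hb hba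
  set g : ℝ := b / a with hg
  have hg0 : 0 < g := div_pos hb ha
  have hg1 : g ≤ 1 := (div_le_one ha).mpr hba
  set S : ℝ := ∑ j : Fin d, g ^ (j : ℕ) with hSdef
  have hS : 0 < S := by
    apply Finset.sum_pos (fun i _ => pow_pos hg0 _)
    exact ⟨⟨0, by omega⟩, Finset.mem_univ _⟩
  have hpstar : ∀ i : Fin d, pstar g d i = g ^ (i : ℕ) / S := fun i => rfl
  have hpdec : Antitone (pstar g d) := by
    intro i j hij
    rw [hpstar, hpstar]
    exact div_le_div_of_nonneg_right (pow_le_pow_of_le_one hg0.le hg1 hij) hS.le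
  have hpsum : ∑ i, pstar g d i = 1 := by
    rw [show ∑ i, pstar g d i = (∑ i : Fin d, g ^ (i : ℕ)) / S from (Finset.sum_div _ _ _).symm]
    exact div_self hS.ne'
  constructor
  · rw [hpsum, hsum]
  intro k hk1 hkcard
  have hkd : k ≤ d := by simpa using hkcard
  rw [sumKLargest_eq_topk' hkd _ hpdec, sumKLargest_eq_topk' hkd _ hdec]
  -- step lemmas
  have hstep1 : ∀ (n : ℕ) (h : n + 1 < d), f ⟨n+1, h⟩ ≤ g * f ⟨n, by omega⟩ := by
    intro n h
    have := hfix ⟨n+1, h⟩ (by simp)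
    simp only at this
    rw [hg, div_mul_eq_mul_div, le_div_iff₀ ha, mul_comm (f ⟨n+1, h⟩) a]
    exact this
  have hpow : ∀ (m n : ℕ) (h : n + m < d), f ⟨n + m, h⟩ ≤ g ^ m * f ⟨n, by omega⟩ := by
    intro m
    induction m with
    | zero => intro n h; simp
    | succ m ih =>
      intro n h
      have h1 : n + m < d := by omega
      have : f ⟨n + (m+1), h⟩ ≤ g * f ⟨n + m, h1⟩ := by
        have := hstep1 (n + m) (by omega)
        convert this using 3 <;> omega
      calc f ⟨n + (m+1), h⟩ ≤ g * f ⟨n + m, h1⟩ := this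
        _ ≤ g * (g ^ m * f ⟨n, by omega⟩) :=
            mul_le_mul_of_nonneg_left (ih n h1) hg0.le
        _ = g ^ (m+1) * f ⟨n, by omega⟩ := by ring
  have hcross : ∀ (i j : Fin d), (i : ℕ) ≤ (j : ℕ) →
      f j * g ^ (i : ℕ) ≤ f i * g ^ (j : ℕ) := by
    intro i j hij
    obtain ⟨m, hm⟩ : ∃ m, (j : ℕ) = (i : ℕ) + m := ⟨(j : ℕ) - i, by omega⟩
    have hjj : f j = f ⟨(i : ℕ) + m, by omega⟩ := by congr 1; exact Fin.ext hm
    have hii : f ⟨(i : ℕ), i.isLt⟩ = f i := by congr 1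
    calc f j * g ^ (i : ℕ) = f ⟨(i : ℕ) + m, by omega⟩ * g ^ (i : ℕ) := by rw [hjj]
      _ ≤ (g ^ m * f ⟨(i : ℕ), i.isLt⟩) * g ^ (i : ℕ) :=
          mul_le_mul_of_nonneg_right (hpow m i (by omega)) (pow_nonneg hg0.le _)
      _ = f i * g ^ ((i : ℕ) + m) := by rw [hii]; ring
      _ = f i * g ^ (j : ℕ) := by rw [hm]
  -- convert sums to filter form
  set A : Finset (Fin d) := Finset.univ.filter (fun i : Fin d => (i : ℕ) < k) with hA
  have hmapA : Finset.univ.map (Fin.castLEEmb hkd) = A := by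
    ext i
    simp only [Finset.mem_map, Finset.mem_univ, true_and, hA, Finset.mem_filter,
      Fin.castLEEmb_apply]
    constructor
    · rintro ⟨j, rfl⟩; simp
    · intro h; exact ⟨⟨(i : ℕ), h⟩, Fin.ext rfl⟩
  have hsumA : ∀ v : Fin d → ℝ, ∑ i : Fin k, v (Fin.castLE hkd i) = ∑ i ∈ A, v i := by
    intro v
    rw [← hmapA, Finset.sum_map]
    rfl
  rw [hsumA, hsumA]
  set B : Finset (Fin d) := Finset.univ.filter (fun i : Fin d => ¬ (i : ℕ) < k) with hB
  have hsplitf : ∑ i ∈ A, f i + ∑ i ∈ B, f i = 1 := by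
    rw [hA, hB, Finset.sum_filter_add_sum_filter_not]; exact hsum
  have hsplitS : ∑ i ∈ A, g ^ (i : ℕ) + ∑ i ∈ B, g ^ (i : ℕ) = S := by
    rw [hA, hB, Finset.sum_filter_add_sum_filter_not]
  have hcross2 : (∑ i ∈ B, f i) * (∑ i ∈ A, g ^ (i : ℕ))
      ≤ (∑ i ∈ A, f i) * (∑ i ∈ B, g ^ (i : ℕ)) := by
    rw [Finset.sum_mul_sum, Finset.sum_mul_sum, Finset.sum_comm]
    apply Finset.sum_le_sum
    intro i hiA
    apply Finset.sum_le_sum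
    intro j hjB
    have hi : (i : ℕ) < k := (Finset.mem_filter.mp hiA).2
    have hj : ¬ (j : ℕ) < k := (Finset.mem_filter.mp hjB).2
    exact hcross i j (by omega)
  have key : (∑ i ∈ A, g ^ (i : ℕ)) ≤ (∑ i ∈ A, f i) * S := by
    calc (∑ i ∈ A, g ^ (i : ℕ))
        = (∑ i ∈ A, f i + ∑ i ∈ B, f i) * (∑ i ∈ A, g ^ (i : ℕ)) := by rw [hsplitf, one_mul]
      _ = (∑ i ∈ A, f i) * (∑ i ∈ A, g ^ (i : ℕ))
          + (∑ i ∈ B, f i) * (∑ i ∈ A, g ^ (i : ℕ)) := by ring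
      _ ≤ (∑ i ∈ A, f i) * (∑ i ∈ A, g ^ (i : ℕ))
          + (∑ i ∈ A, f i) * (∑ i ∈ B, g ^ (i : ℕ)) := by linarith
      _ = (∑ i ∈ A, f i) * S := by rw [← hsplitS]; ring
  have hps : ∑ i ∈ A, pstar g d i = (∑ i ∈ A, g ^ (i : ℕ)) / S := by
    simp only [pstar]
    rw [← Finset.sum_div]
  rw [hps, div_le_iff₀ hS]
  exact key
end
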